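/- arXiv:2507.12178 — 4 statements merged into one kernel-verified Lean document; each statement's English description precedes it below -/
import Mathlib

section
/- Let I be a monomial ideal in k[x,y] with minimal monomial generating set G(I). Then the minimal number of generators satisfies μ(I) ≤ μ(Ī), where Ī is the integral closure of I. -/
open MvPolynomial

namespace MuProof

open Finset


open Finset


open Finset

abbrev Pt := ℕ × ℕ

def minsP {X : Type} [PartialOrder X] (S : Set X) : Set X :=
  {p | p ∈ S ∧ ∀ q, q ∈ S → q ≤ p → q = p}

def USet (T : Set Pt) : Set Pt := {p | ∃ g ∈ T, g ≤ p}

def SbF (T : Set Pt) : Set Pt :=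
  {p | ∃ r : ℕ, 0 < r ∧ ∃ f : Fin r → Pt, (∀ j, f j ∈ T) ∧
    (∑ j, (f j).1) ≤ r * p.1 ∧ (∑ j, (f j).2) ≤ r * p.2}

lemma minsP_antichain {X : Type} [PartialOrder X] (S : Set X) :
    ∀ p ∈ minsP S, ∀ q ∈ minsP S, p ≤ q → p = q := by
  intro p hp q hq hpq
  exact (hq.2 p hp.1 hpq)

lemma antichain_finite {S : Set Pt} (h : ∀ p ∈ S, ∀ q ∈ S, p ≤ q → p = q) : S.Finite := by
  rcases S.eq_empty_or_nonempty with hS | ⟨p0, hp0⟩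
  · simp [hS]
  have hinj1 : Set.InjOn Prod.fst S := by
    intro p hp q hq hpq
    rcases le_total p.2 q.2 with h2 | h2
    · exact h p hp q hq ⟨le_of_eq hpq, h2⟩
    · exact (h q hq p hp ⟨le_of_eq hpq.symm, h2⟩).symm
  have hinj2 : Set.InjOn Prod.snd S := by
    intro p hp q hq hpq
    rcases le_total p.1 q.1 with h2 | h2
    · exact h p hp q hq ⟨h2, le_of_eq hpq⟩
    · exact (h q hq p hp ⟨h2, le_of_eq hpq.symm⟩).symm
  have hsub : S ⊆ (S ∩ {p | p.1 ≤ p0.1}) ∪ (S ∩ {p | p.2 ≤ p0.2}) := by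
    intro p hp
    by_cases h1 : p.1 ≤ p0.1
    · exact Or.inl ⟨hp, h1⟩
    · refine Or.inr ⟨hp, ?_⟩
      by_contra h2
      simp only [Set.mem_setOf_eq] at h2
      push_neg at h1 h2
      have heq := h p0 hp0 p hp ⟨le_of_lt h1, le_of_lt h2⟩
      rw [heq] at h1
      exact lt_irrefl _ h1
  have f1 : (S ∩ {p | p.1 ≤ p0.1}).Finite := by
    apply Set.Finite.of_finite_image (f := Prod.fst)
    · apply Set.Finite.subset (Set.finite_Iic p0.1)
      rintro a ⟨p, ⟨_, hp2⟩, rfl⟩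
      exact hp2
    · exact hinj1.mono Set.inter_subset_left
  have f2 : (S ∩ {p | p.2 ≤ p0.2}).Finite := by
    apply Set.Finite.of_finite_image (f := Prod.snd)
    · apply Set.Finite.subset (Set.finite_Iic p0.2)
      rintro a ⟨p, ⟨_, hp2⟩, rfl⟩
      exact hp2
    · exact hinj2.mono Set.inter_subset_left
  exact Set.Finite.subset (f1.union f2) hsub

lemma exists_minsP_le {S : Set Pt} {p : Pt} (hp : p ∈ S) : ∃ q ∈ minsP S, q ≤ p := by
  have H : ∀ n, ∀ p, p ∈ S → p.1 + p.2 ≤ n → ∃ q ∈ minsP S, q ≤ p := by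
    intro n
    induction n with
    | zero =>
      intro p hp hn
      refine ⟨p, ⟨hp, ?_⟩, le_rfl⟩
      intro q hq hqp
      have h1 := hqp.1; have h2 := hqp.2
      have he : q.1 = p.1 ∧ q.2 = p.2 := by omega
      exact Prod.ext he.1 he.2
    | succ n ih =>
      intro p hp hn
      by_cases hmin : ∀ q, q ∈ S → q ≤ p → q = p
      · exact ⟨p, ⟨hp, hmin⟩, le_rfl⟩
      · push_neg at hmin
        obtain ⟨q, hq, hqp, hne⟩ := hmin
        have h1 := hqp.1; have h2 := hqp.2
        have hcomp : q.1 ≠ p.1 ∨ q.2 ≠ p.2 := by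
          by_contra hc; push_neg at hc; exact hne (Prod.ext hc.1 hc.2)
        have hlt : q.1 + q.2 ≤ n := by omega
        obtain ⟨m, hm, hmq⟩ := ih q hq hlt
        exact ⟨m, hm, hmq.trans hqp⟩
  exact H (p.1 + p.2) p hp le_rfl

lemma mem_SbF_of_le {T : Set Pt} {g p : Pt} (hg : g ∈ T) (hle : g ≤ p) : p ∈ SbF T := by
  refine ⟨1, one_pos, fun _ => g, fun _ => hg, ?_, ?_⟩
  · simpa using hle.1
  · simpa using hle.2

lemma SbF_mono {T T' : Set Pt} (h : T ⊆ T') : SbF T ⊆ SbF T' := by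
  rintro p ⟨r, hr, f, hf, h1, h2⟩
  exact ⟨r, hr, f, fun j => h (hf j), h1, h2⟩

lemma SbF_eq_of_mins (T : Set Pt) : SbF (minsP (USet T)) = SbF T := by
  apply Set.Subset.antisymm
  · rintro p ⟨r, hr, f, hf, h1, h2⟩
    have hch : ∀ j, ∃ g, g ∈ T ∧ g ≤ f j := fun j => (hf j).1
    choose g hg hgle using hch
    refine ⟨r, hr, g, hg, le_trans ?_ h1, le_trans ?_ h2⟩
    · exact Finset.sum_le_sum fun j _ => (hgle j).1
    · exact Finset.sum_le_sum fun j _ => (hgle j).2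
  · rintro p ⟨r, hr, f, hf, h1, h2⟩
    have hch : ∀ j, ∃ g, g ∈ minsP (USet T) ∧ g ≤ f j := by
      intro j
      obtain ⟨q, hq, hqle⟩ := exists_minsP_le (S := USet T) ⟨f j, hf j, le_rfl⟩
      exact ⟨q, hq, hqle⟩
    choose g hg hgle using hch
    refine ⟨r, hr, g, hg, le_trans ?_ h1, le_trans ?_ h2⟩
    · exact Finset.sum_le_sum fun j _ => (hgle j).1
    · exact Finset.sum_le_sum fun j _ => (hgle j).2



open Finset
def Men (k : ℕ) (x y : ℕ → ℕ) : Set Pt := {p | ∃ i, i < k ∧ p = (x i, y i)}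

lemma Men_mono {k k' : ℕ} (h : k ≤ k') (x y : ℕ → ℕ) : Men k x y ⊆ Men k' x y := by
  rintro p ⟨i, hi, rfl⟩
  exact ⟨i, lt_of_lt_of_le hi h, rfl⟩

/-- build a `Fin`-certificate from weights -/
lemma exists_fin_of_weights (k : ℕ) (x y : ℕ → ℕ) (w : ℕ → ℕ) :
    ∃ f : Fin (∑ i ∈ Finset.range k, w i) → Pt, (∀ j, f j ∈ Men k x y) ∧
      (∑ j, (f j).1) = ∑ i ∈ Finset.range k, w i * x i ∧
      (∑ j, (f j).2) = ∑ i ∈ Finset.range k, w i * y i := by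
  induction k with
  | zero =>
    refine ⟨fun j => (Fin.elim0 (by simpa using j) : Pt), ?_, ?_, ?_⟩ <;> simp
  | succ n ih =>
    obtain ⟨f, hf, e1, e2⟩ := ih
    have e : ∑ i ∈ Finset.range (n+1), w i = (∑ i ∈ Finset.range n, w i) + w n :=
      Finset.sum_range_succ w n
    set F : Fin ((∑ i ∈ Finset.range n, w i) + w n) → Pt :=
      Fin.append f (fun _ : Fin (w n) => ((x n, y n) : Pt)) with hF
    have hFmem : ∀ j, F j ∈ Men (n+1) x y := by
      intro j
      refine Fin.addCases (motive := fun j => F j ∈ Men (n+1) x y) ?_ ?_ j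
      · intro i
        rw [hF, Fin.append_left]
        exact Men_mono (Nat.le_succ n) x y (hf i)
      · intro i
        rw [hF, Fin.append_right]
        exact ⟨n, Nat.lt_succ_self n, rfl⟩
    have hs1 : ∑ j, (F j).1 = ∑ i ∈ Finset.range (n+1), w i * x i := by
      rw [Fin.sum_univ_add (f := fun j => (F j).1)]
      simp only [hF, Fin.append_left, Fin.append_right]
      rw [e1, Finset.sum_range_succ]
      simp [mul_comm]
    have hs2 : ∑ j, (F j).2 = ∑ i ∈ Finset.range (n+1), w i * y i := by
      rw [Fin.sum_univ_add (f := fun j => (F j).2)]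
      simp only [hF, Fin.append_left, Fin.append_right]
      rw [e2, Finset.sum_range_succ]
      simp [mul_comm]
    refine ⟨fun j => F (finCongr e j), fun j => hFmem _, ?_, ?_⟩
    · rw [Fintype.sum_equiv (finCongr e) _ (fun j => (F j).1) (fun _ => rfl)]
      exact hs1
    · rw [Fintype.sum_equiv (finCongr e) _ (fun j => (F j).2) (fun _ => rfl)]
      exact hs2

lemma mem_SbF_Men {k : ℕ} {x y : ℕ → ℕ} {p : Pt} :
    p ∈ SbF (Men k x y) ↔ ∃ w : ℕ → ℕ, 0 < ∑ i ∈ Finset.range k, w i ∧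
      ∑ i ∈ Finset.range k, w i * x i ≤ (∑ i ∈ Finset.range k, w i) * p.1 ∧
      ∑ i ∈ Finset.range k, w i * y i ≤ (∑ i ∈ Finset.range k, w i) * p.2 := by
  constructor
  · rintro ⟨r, hr, f, hf, h1, h2⟩
    have hch : ∀ j, ∃ i, i < k ∧ f j = (x i, y i) := fun j => hf j
    choose g hg hfg using hch
    classical
    refine ⟨fun i => #(Finset.univ.filter (fun j => g j = i)), ?_, ?_, ?_⟩
    · have hcards : ∑ i ∈ Finset.range k, #(Finset.univ.filter (fun j => g j = i)) = r := by
        rw [← Finset.card_eq_sum_card_fiberwise (fun j _ => Finset.mem_range.2 (hg j))]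
        simp
      rw [hcards]; exact hr
    · have hcards : ∑ i ∈ Finset.range k, #(Finset.univ.filter (fun j => g j = i)) = r := by
        rw [← Finset.card_eq_sum_card_fiberwise (fun j _ => Finset.mem_range.2 (hg j))]
        simp
      rw [hcards]
      refine le_trans (le_of_eq ?_) h1
      rw [← Finset.sum_fiberwise_of_maps_to (fun j _ => Finset.mem_range.2 (hg j)) (fun j => (f j).1)]
      refine Finset.sum_congr rfl fun i _ => ?_
      rw [Finset.sum_congr rfl (fun j hj => ?_), Finset.sum_const, smul_eq_mul]
      rw [hfg j]
      simp only [Finset.mem_filter] at hj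
      rw [hj.2]
    · have hcards : ∑ i ∈ Finset.range k, #(Finset.univ.filter (fun j => g j = i)) = r := by
        rw [← Finset.card_eq_sum_card_fiberwise (fun j _ => Finset.mem_range.2 (hg j))]
        simp
      rw [hcards]
      refine le_trans (le_of_eq ?_) h2
      rw [← Finset.sum_fiberwise_of_maps_to (fun j _ => Finset.mem_range.2 (hg j)) (fun j => (f j).2)]
      refine Finset.sum_congr rfl fun i _ => ?_
      rw [Finset.sum_congr rfl (fun j hj => ?_), Finset.sum_const, smul_eq_mul]
      rw [hfg j]
      simp only [Finset.mem_filter] at hj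
      rw [hj.2]
  · rintro ⟨w, hw, h1, h2⟩
    obtain ⟨f, hf, e1, e2⟩ := exists_fin_of_weights k x y w
    exact ⟨_, hw, f, hf, by rw [e1]; exact h1, by rw [e2]; exact h2⟩

lemma SbF_line {k : ℕ} {x y : ℕ → ℕ} {α β c : ℕ}
    (h : ∀ i, i < k → c ≤ α * x i + β * y i) {p : Pt}
    (hp : p ∈ SbF (Men k x y)) : c ≤ α * p.1 + β * p.2 := by
  obtain ⟨w, hw, h1, h2⟩ := mem_SbF_Men.1 hp
  set r := ∑ i ∈ Finset.range k, w i with hr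
  have key : r * c ≤ r * (α * p.1 + β * p.2) := by
    calc r * c = ∑ i ∈ Finset.range k, w i * c := by rw [Finset.sum_mul]
    _ ≤ ∑ i ∈ Finset.range k, w i * (α * x i + β * y i) :=
        Finset.sum_le_sum fun i hi => Nat.mul_le_mul_left _ (h i (Finset.mem_range.1 hi))
    _ = α * (∑ i ∈ Finset.range k, w i * x i) + β * (∑ i ∈ Finset.range k, w i * y i) := by
        rw [Finset.mul_sum, Finset.mul_sum, ← Finset.sum_add_distrib]
        exact Finset.sum_congr rfl fun i _ => by ring
    _ ≤ α * (r * p.1) + β * (r * p.2) :=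
        add_le_add (Nat.mul_le_mul_left _ h1) (Nat.mul_le_mul_left _ h2)
    _ = r * (α * p.1 + β * p.2) := by ring
  exact Nat.le_of_mul_le_mul_left key hw

lemma SbF_fst {k : ℕ} {x y : ℕ → ℕ} {c : ℕ} (h : ∀ i, i < k → c ≤ x i) {p : Pt}
    (hp : p ∈ SbF (Men k x y)) : c ≤ p.1 := by
  have := SbF_line (α := 1) (β := 0) (c := c) (fun i hi => by simpa using h i hi) hp
  simpa using this

lemma SbF_snd {k : ℕ} {x y : ℕ → ℕ} {c : ℕ} (h : ∀ i, i < k → c ≤ y i) {p : Pt}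
    (hp : p ∈ SbF (Men k x y)) : c ≤ p.2 := by
  have := SbF_line (α := 0) (β := 1) (c := c) (fun i hi => by simpa using h i hi) hp
  simpa using this



open Finset
set_option maxHeartbeats 1000000 in
lemma split_cert (k s : ℕ) (x y : ℕ → ℕ) (σ : ℕ → Prop) [DecidablePred σ]
    (hsk : s < k) (hσs : σ s)
    (α β : ℕ) (hα : 0 < α) (hβ : 0 < β)
    (hmin : ∀ i, i < k → α * x s + β * y s ≤ α * x i + β * y i)
    (hleft : ∀ i, i < k → ¬ σ i → y s ≤ y i ∧ x i ≤ x s)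
    (hright : ∀ i, i < k → σ i → y i ≤ y s)
    (P1 P2 : ℕ) (hP : x s ≤ P1)
    (w : ℕ → ℕ) (hw : 0 < ∑ i ∈ Finset.range k, w i)
    (h1 : ∑ i ∈ Finset.range k, w i * x i ≤ (∑ i ∈ Finset.range k, w i) * P1)
    (h2 : ∑ i ∈ Finset.range k, w i * y i ≤ (∑ i ∈ Finset.range k, w i) * P2) :
    ∃ w' : ℕ → ℕ, (∀ i, ¬ σ i → w' i = 0) ∧ 0 < ∑ i ∈ Finset.range k, w' i ∧
      ∑ i ∈ Finset.range k, w' i * x i ≤ (∑ i ∈ Finset.range k, w' i) * P1 ∧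
      ∑ i ∈ Finset.range k, w' i * y i ≤ (∑ i ∈ Finset.range k, w' i) * P2 := by
  classical
  set wL : ℕ → ℕ := fun i => if σ i then 0 else w i with hwL
  set wR : ℕ → ℕ := fun i => if σ i then w i else 0 with hwR
  set A := ∑ i ∈ Finset.range k, wL i with hA
  set B := ∑ i ∈ Finset.range k, wR i with hB
  set XU := ∑ i ∈ Finset.range k, wL i * x i with hXU'
  set YU := ∑ i ∈ Finset.range k, wL i * y i with hYU'
  set XV := ∑ i ∈ Finset.range k, wR i * x i with hXV'
  set YV := ∑ i ∈ Finset.range k, wR i * y i with hYV'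
  have hAB : A + B = ∑ i ∈ Finset.range k, w i := by
    rw [hA, hB, ← Finset.sum_add_distrib]
    exact Finset.sum_congr rfl fun i _ => by by_cases h : σ i <;> simp [hwL, hwR, h]
  have hXsplit : XU + XV = ∑ i ∈ Finset.range k, w i * x i := by
    rw [hXU', hXV', ← Finset.sum_add_distrib]
    exact Finset.sum_congr rfl fun i _ => by by_cases h : σ i <;> simp [hwL, hwR, h]
  have hYsplit : YU + YV = ∑ i ∈ Finset.range k, w i * y i := by
    rw [hYU', hYV', ← Finset.sum_add_distrib]
    exact Finset.sum_congr rfl fun i _ => by by_cases h : σ i <;> simp [hwL, hwR, h]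
  have hAy : A * y s ≤ YU := by
    rw [hA, Finset.sum_mul, hYU']
    refine Finset.sum_le_sum fun i hi => ?_
    by_cases h : σ i
    · simp [hwL, h]
    · exact Nat.mul_le_mul_left _ (hleft i (Finset.mem_range.1 hi) h).1
  have hXUb : XU ≤ A * x s := by
    rw [hA, Finset.sum_mul, hXU']
    refine Finset.sum_le_sum fun i hi => ?_
    by_cases h : σ i
    · simp [hwL, h]
    · exact Nat.mul_le_mul_left _ (hleft i (Finset.mem_range.1 hi) h).2
  have hYVb : YV ≤ B * y s := by
    rw [hB, Finset.sum_mul, hYV']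
    refine Finset.sum_le_sum fun i hi => ?_
    by_cases h : σ i
    · exact Nat.mul_le_mul_left _ (hright i (Finset.mem_range.1 hi) h)
    · simp [hwR, h]
  have hF3 : (α * x s + β * y s) * A ≤ α * XU + β * YU := by
    have e : α * XU + β * YU = ∑ i ∈ Finset.range k, wL i * (α * x i + β * y i) := by
      rw [hXU', hYU', Finset.mul_sum, Finset.mul_sum, ← Finset.sum_add_distrib]
      exact Finset.sum_congr rfl fun i _ => by ring
    rw [e, hA, Finset.mul_sum]
    refine Finset.sum_le_sum fun i hi => ?_
    rw [mul_comm]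
    by_cases h : σ i
    · simp [hwL, h]
    · exact Nat.mul_le_mul_left _ (hmin i (Finset.mem_range.1 hi))
  have hF4 : (α * x s + β * y s) * B ≤ α * XV + β * YV := by
    have e : α * XV + β * YV = ∑ i ∈ Finset.range k, wR i * (α * x i + β * y i) := by
      rw [hXV', hYV', Finset.mul_sum, Finset.mul_sum, ← Finset.sum_add_distrib]
      exact Finset.sum_congr rfl fun i _ => by ring
    rw [e, hB, Finset.mul_sum]
    refine Finset.sum_le_sum fun i hi => ?_
    rw [mul_comm]
    by_cases h : σ i
    · exact Nat.mul_le_mul_left _ (hmin i (Finset.mem_range.1 hi))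
    · simp [hwR, h]
  have hsmem : s ∈ Finset.range k := Finset.mem_range.2 hsk
  by_cases hc : XV ≤ B * P1
  · -- easy case
    refine ⟨fun i => wR i + (if i = s then A else 0), ?_, ?_, ?_, ?_⟩
    · intro i hi
      have hne : i ≠ s := fun h => hi (h ▸ hσs)
      simp [hwR, hi, hne]
    · have e : ∑ i ∈ Finset.range k, (wR i + (if i = s then A else 0)) = B + A := by
        rw [Finset.sum_add_distrib, ← hB, Finset.sum_ite_eq' (Finset.range k) s (fun _ => A)]
        simp [hsmem]
      rw [e]; omega
    · have e : ∑ i ∈ Finset.range k, (wR i + (if i = s then A else 0)) = B + A := by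
        rw [Finset.sum_add_distrib, ← hB, Finset.sum_ite_eq' (Finset.range k) s (fun _ => A)]
        simp [hsmem]
      have e2 : ∑ i ∈ Finset.range k, (wR i + (if i = s then A else 0)) * x i
          = XV + A * x s := by
        simp only [add_mul, ite_mul, zero_mul]
        rw [Finset.sum_add_distrib, ← hXV', Finset.sum_ite_eq' (Finset.range k) s (fun i => A * x i)]
        simp [hsmem]
      rw [e, e2]
      have : A * x s ≤ A * P1 := Nat.mul_le_mul_left _ hP
      calc XV + A * x s ≤ B * P1 + A * P1 := by omega
      _ = (B + A) * P1 := by ring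
    · have e : ∑ i ∈ Finset.range k, (wR i + (if i = s then A else 0)) = B + A := by
        rw [Finset.sum_add_distrib, ← hB, Finset.sum_ite_eq' (Finset.range k) s (fun _ => A)]
        simp [hsmem]
      have e2 : ∑ i ∈ Finset.range k, (wR i + (if i = s then A else 0)) * y i
          = YV + A * y s := by
        simp only [add_mul, ite_mul, zero_mul]
        rw [Finset.sum_add_distrib, ← hYV', Finset.sum_ite_eq' (Finset.range k) s (fun i => A * y i)]
        simp [hsmem]
      rw [e, e2]
      have hY : YU + YV ≤ (A + B) * P2 := by rw [hYsplit, hAB]; exact h2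
      calc YV + A * y s ≤ YU + YV := by omega
      _ ≤ (A + B) * P2 := hY
      _ = (B + A) * P2 := by ring
  · -- hard case
    push_neg at hc
    have hB1 : 0 < B := by
      rcases Nat.eq_zero_or_pos B with hB0 | hB0
      · exfalso
        have hz : ∀ i ∈ Finset.range k, wR i = 0 := by
          intro i hi
          have := Finset.sum_eq_zero_iff.1 (hB.symm.trans hB0 : (∑ i ∈ Finset.range k, wR i) = 0)
          exact this i hi
        have hXV0 : XV = 0 := by
          rw [hXV']
          exact Finset.sum_eq_zero fun i hi => by rw [hz i hi, zero_mul]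
        omega
      · exact hB0
    have hBxs : B * x s ≤ B * P1 := Nat.mul_le_mul_left _ hP
    have hBxsXV : B * x s ≤ XV := le_trans hBxs (le_of_lt hc)
    have e : ∑ i ∈ Finset.range k, ((P1 - x s) * wR i + (if i = s then XV - B * P1 else 0))
        = (P1 - x s) * B + (XV - B * P1) := by
      rw [Finset.sum_add_distrib, ← Finset.mul_sum, ← hB,
        Finset.sum_ite_eq' (Finset.range k) s (fun _ => XV - B * P1)]
      simp [hsmem]
    have ex : ∑ i ∈ Finset.range k, ((P1 - x s) * wR i + (if i = s then XV - B * P1 else 0)) * x i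
        = (P1 - x s) * XV + (XV - B * P1) * x s := by
      simp only [add_mul, ite_mul, zero_mul, mul_assoc]
      rw [Finset.sum_add_distrib, ← Finset.mul_sum, ← hXV',
        Finset.sum_ite_eq' (Finset.range k) s (fun i => (XV - B * P1) * x i)]
      simp [hsmem]
    have ey : ∑ i ∈ Finset.range k, ((P1 - x s) * wR i + (if i = s then XV - B * P1 else 0)) * y i
        = (P1 - x s) * YV + (XV - B * P1) * y s := by
      simp only [add_mul, ite_mul, zero_mul, mul_assoc]
      rw [Finset.sum_add_distrib, ← Finset.mul_sum, ← hYV',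
        Finset.sum_ite_eq' (Finset.range k) s (fun i => (XV - B * P1) * y i)]
      simp [hsmem]
    refine ⟨fun i => (P1 - x s) * wR i + (if i = s then XV - B * P1 else 0), ?_, ?_, ?_, ?_⟩
    · intro i hi
      have hne : i ≠ s := fun h => hi (h ▸ hσs)
      simp [hwR, hi, hne]
    · -- positivity
      rw [e]; omega
    · -- x inequality
      rw [e, ex]
      have hci : (B:ℤ) * P1 < XV := by exact_mod_cast hc
      zify [hP, le_of_lt hc, hBxs, hBxsXV]
      linarith [hci, sq_nonneg ((0:ℤ)), (by ring : (((P1:ℤ) - x s) * B + ((XV:ℤ) - B * P1)) * P1 - ((((P1:ℤ) - x s) * XV) + ((XV:ℤ) - B * P1) * x s) = 0)]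
    · -- y inequality
      rw [e, ey]
      -- move to ℤ
      zify [hP, le_of_lt hc, hBxs, hBxsXV]
      have hci : (B:ℤ) * P1 < XV := by exact_mod_cast hc
      have hPi : ((x s : ℕ):ℤ) ≤ P1 := by exact_mod_cast hP
      have hF3i : (((α:ℤ)) * (x s) + β * (y s)) * A ≤ α * XU + β * YU := by exact_mod_cast hF3
      have hF4i : (((α:ℤ)) * (x s) + β * (y s)) * B ≤ α * XV + β * YV := by exact_mod_cast hF4
      have hAyi : (A:ℤ) * (y s) ≤ YU := by exact_mod_cast hAy
      have hXUi : (XU:ℤ) ≤ A * (x s) := by exact_mod_cast hXUb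
      have hYVi : (YV:ℤ) ≤ B * (y s) := by exact_mod_cast hYVb
      have h1i : (XU:ℤ) + XV ≤ (A + B) * P1 := by
        have : XU + XV ≤ (A + B) * P1 := by rw [hXsplit, hAB]; exact h1
        exact_mod_cast this
      have h2i : (YU:ℤ) + YV ≤ (A + B) * P2 := by
        have : YU + YV ≤ (A + B) * P2 := by rw [hYsplit, hAB]; exact h2
        exact_mod_cast this
      have hαi : (0:ℤ) < α := by exact_mod_cast hα
      have hβi : (0:ℤ) < β := by exact_mod_cast hβ
      have hri : (0:ℤ) < A + B := by
        have : (0:ℕ) < A + B := by omega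
        exact_mod_cast this
      have hbxi : (B:ℤ) * (x s) ≤ (B:ℤ) * P1 := by exact_mod_cast hBxs
      have hα'n : (0:ℤ) ≤ B * (y s) - YV := by linarith
      have hβ'n : (0:ℤ) < XV - B * (x s) := by linarith
      have hAxsXU : (0:ℤ) ≤ A * (x s) - XU := by linarith
      have e1 : (0:ℤ) ≤ ((XV:ℤ) - B * (x s)) * ((α * XU + β * YU) - (α * (x s) + β * (y s)) * A) :=
        mul_nonneg (le_of_lt hβ'n) (by linarith)
      have e2 : (0:ℤ) ≤ ((A:ℤ) * (x s) - XU) * ((α * XV + β * YV) - (α * (x s) + β * (y s)) * B) :=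
        mul_nonneg hAxsXU (by linarith)
      have hidK2 : (β:ℤ) * (((XV:ℤ) - B * (x s)) * YU + ((B:ℤ) * (y s) - YV) * XU)
          - (β:ℤ) * (A * (((XV:ℤ) - B * (x s)) * (y s) + ((B:ℤ) * (y s) - YV) * (x s)))
          = ((XV:ℤ) - B * (x s)) * ((α * XU + β * YU) - (α * (x s) + β * (y s)) * A)
            + ((A:ℤ) * (x s) - XU) * ((α * XV + β * YV) - (α * (x s) + β * (y s)) * B) := by
        ring
      have hK2 : (β:ℤ) * (A * (((XV:ℤ) - B * (x s)) * (y s) + ((B:ℤ) * (y s) - YV) * (x s)))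
          ≤ β * (((XV:ℤ) - B * (x s)) * YU + ((B:ℤ) * (y s) - YV) * XU) := by linarith [e1, e2, hidK2]
      have hK2' : (A:ℤ) * (((XV:ℤ) - B * (x s)) * (y s) + ((B:ℤ) * (y s) - YV) * (x s))
          ≤ ((XV:ℤ) - B * (x s)) * YU + ((B:ℤ) * (y s) - YV) * XU :=
        le_of_mul_le_mul_left hK2 hβi
      have hBpart : (B:ℤ) * (((XV:ℤ) - B * (x s)) * (y s) + ((B:ℤ) * (y s) - YV) * (x s))
          = ((XV:ℤ) - B * (x s)) * YV + ((B:ℤ) * (y s) - YV) * XV := by ring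
      have hup1 : ((XV:ℤ) - B * (x s)) * (YU + YV) ≤ ((XV:ℤ) - B * (x s)) * ((A + B) * P2) :=
        mul_le_mul_of_nonneg_left h2i (le_of_lt hβ'n)
      have hup2 : ((B:ℤ) * (y s) - YV) * (XU + XV) ≤ ((B:ℤ) * (y s) - YV) * ((A + B) * P1) :=
        mul_le_mul_of_nonneg_left h1i hα'n
      have hstep : ((A:ℤ) + B) * (((XV:ℤ) - B * (x s)) * (y s) + ((B:ℤ) * (y s) - YV) * (x s))
          ≤ ((A:ℤ) + B) * (((XV:ℤ) - B * (x s)) * P2 + ((B:ℤ) * (y s) - YV) * P1) := by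
        linarith [hK2', hBpart, hup1, hup2]
      have hkey : ((XV:ℤ) - B * (x s)) * (y s) + ((B:ℤ) * (y s) - YV) * (x s)
          ≤ ((XV:ℤ) - B * (x s)) * P2 + ((B:ℤ) * (y s) - YV) * P1 :=
        le_of_mul_le_mul_left hstep hri
      linarith [hkey]


lemma cert_to_right {k s : ℕ} (hsk : s < k) (x y : ℕ → ℕ) (P : Pt)
    (w' : ℕ → ℕ) (hsupp : ∀ i, ¬ s ≤ i → w' i = 0)
    (hw : 0 < ∑ i ∈ Finset.range k, w' i)
    (h1 : ∑ i ∈ Finset.range k, w' i * x i ≤ (∑ i ∈ Finset.range k, w' i) * P.1)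
    (h2 : ∑ i ∈ Finset.range k, w' i * y i ≤ (∑ i ∈ Finset.range k, w' i) * P.2) :
    P ∈ SbF (Men (k - s) (fun i => x (s + i)) (fun i => y (s + i))) := by
  have key : ∀ f : ℕ → ℕ, ∑ i ∈ Finset.range k, w' i * f i
      = ∑ i ∈ Finset.range (k - s), w' (s + i) * f (s + i) := by
    intro f
    rw [Finset.range_eq_Ico, ← Finset.sum_Ico_consecutive _ (Nat.zero_le s) (le_of_lt hsk)]
    have hz : ∑ i ∈ Finset.Ico 0 s, w' i * f i = 0 := by
      refine Finset.sum_eq_zero fun i hi => ?_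
      rw [hsupp i (by simp only [Finset.mem_Ico] at hi; omega), zero_mul]
    rw [hz, zero_add, Finset.sum_Ico_eq_sum_range]
  have key0 : ∑ i ∈ Finset.range k, w' i = ∑ i ∈ Finset.range (k - s), w' (s + i) := by
    have := key (fun _ => 1)
    simpa using this
  rw [mem_SbF_Men]
  exact ⟨fun i => w' (s + i), by rw [← key0]; exact hw,
    by rw [← key0, ← key]; exact h1, by rw [← key0, ← key]; exact h2⟩

lemma cert_to_left {k s : ℕ} (hsk : s < k) (x y : ℕ → ℕ) (P : Pt)
    (w' : ℕ → ℕ) (hsupp : ∀ i, ¬ i ≤ s → w' i = 0)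
    (hw : 0 < ∑ i ∈ Finset.range k, w' i)
    (h1 : ∑ i ∈ Finset.range k, w' i * x i ≤ (∑ i ∈ Finset.range k, w' i) * P.1)
    (h2 : ∑ i ∈ Finset.range k, w' i * y i ≤ (∑ i ∈ Finset.range k, w' i) * P.2) :
    P ∈ SbF (Men (s + 1) x y) := by
  have key : ∀ f : ℕ → ℕ, ∑ i ∈ Finset.range k, w' i * f i
      = ∑ i ∈ Finset.range (s + 1), w' i * f i := by
    intro f
    refine (Finset.sum_subset (Finset.range_subset_range.2 hsk) ?_).symm
    intro i hik his
    rw [hsupp i (by simp only [Finset.mem_range] at his; omega), zero_mul]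
  have key0 : ∑ i ∈ Finset.range k, w' i = ∑ i ∈ Finset.range (s + 1), w' i := by
    have := key (fun _ => 1)
    simpa using this
  rw [mem_SbF_Men]
  exact ⟨w', by rw [← key0]; exact hw,
    by rw [← key0, ← key]; exact h1, by rw [← key0, ← key]; exact h2⟩

lemma SL_right (k s : ℕ) (x y : ℕ → ℕ)
    (hx : ∀ i j, i < j → j < k → x i < x j) (hy : ∀ i j, i < j → j < k → y j < y i)
    (hsk : s < k) (α β : ℕ) (hα : 0 < α) (hβ : 0 < β)
    (hmin : ∀ i, i < k → α * x s + β * y s ≤ α * x i + β * y i)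
    (p : Pt) (hp : p ∈ SbF (Men k x y)) (hps : x s ≤ p.1) :
    p ∈ SbF (Men (k - s) (fun i => x (s + i)) (fun i => y (s + i))) := by
  classical
  obtain ⟨w, hw, h1, h2⟩ := mem_SbF_Men.1 hp
  obtain ⟨w', hsupp, hw', h1', h2'⟩ :=
    split_cert k s x y (fun i => s ≤ i) hsk le_rfl α β hα hβ hmin
      (fun i hik hσ => ⟨le_of_lt (hy i s (by omega) hsk), le_of_lt (hx i s (by omega) hsk)⟩)
      (fun i hik hσ => by
        rcases Nat.eq_or_lt_of_le hσ with h | h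
        · subst h; exact le_rfl
        · exact le_of_lt (hy s i h hik))
      p.1 p.2 hps w hw h1 h2
  exact cert_to_right hsk x y p w' hsupp hw' h1' h2'

lemma SL_left (k s : ℕ) (x y : ℕ → ℕ)
    (hx : ∀ i j, i < j → j < k → x i < x j) (hy : ∀ i j, i < j → j < k → y j < y i)
    (hsk : s < k) (α β : ℕ) (hα : 0 < α) (hβ : 0 < β)
    (hmin : ∀ i, i < k → α * x s + β * y s ≤ α * x i + β * y i)
    (p : Pt) (hp : p ∈ SbF (Men k x y)) (hps : y s ≤ p.2) :
    p ∈ SbF (Men (s + 1) x y) := by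
  classical
  obtain ⟨w, hw, h1, h2⟩ := mem_SbF_Men.1 hp
  obtain ⟨w', hsupp, hw', h1', h2'⟩ :=
    split_cert k s y x (fun i => i ≤ s) hsk le_rfl β α hβ hα
      (fun i hik => by linarith [hmin i hik])
      (fun i hik hσ => ⟨le_of_lt (hx s i (by omega) hik), le_of_lt (hy s i (by omega) hik)⟩)
      (fun i hik hσ => by
        rcases Nat.eq_or_lt_of_le hσ with h | h
        · subst h; exact le_rfl
        · exact le_of_lt (hx i s h hsk))
      p.2 p.1 hps w hw h2 h1
  exact cert_to_left hsk x y p w' hsupp hw' h2' h1'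

lemma telescope_x (x : ℕ → ℕ) : ∀ n, (∀ i, i < n → x i < x (i+1)) →
    x 0 + ∑ i ∈ Finset.range n, (x (i+1) - x i) = x n := by
  intro n
  induction n with
  | zero => simp
  | succ n ih =>
    intro h
    have h' : ∀ i, i < n → x i < x (i+1) := fun i hi => h i (by omega)
    have hih := ih h'
    rw [Finset.sum_range_succ]
    have hx : x n < x (n+1) := h n (by omega)
    omega

lemma telescope_y (y : ℕ → ℕ) : ∀ n, (∀ i, i < n → y (i+1) < y i) →
    y n + ∑ i ∈ Finset.range n, (y i - y (i+1)) = y 0 := by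
  intro n
  induction n with
  | zero => simp
  | succ n ih =>
    intro h
    have h' : ∀ i, i < n → y (i+1) < y i := fun i hi => h i (by omega)
    have hih := ih h'
    rw [Finset.sum_range_succ]
    have hy : y (n+1) < y n := h n (by omega)
    omega

lemma two_point_cert (k : ℕ) (x y : ℕ → ℕ) (hk : 2 ≤ k) (a b : ℕ) (P : Pt)
    (hab : 0 < a + b)
    (hx1 : a * x 0 + b * x (k-1) ≤ (a + b) * P.1)
    (hy1 : a * y 0 + b * y (k-1) ≤ (a + b) * P.2) : P ∈ SbF (Men k x y) := by
  classical
  rw [mem_SbF_Men]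
  have key : ∀ f : ℕ → ℕ, ∑ i ∈ Finset.range k,
      ((if i = 0 then a else 0) + (if i = k-1 then b else 0)) * f i = a * f 0 + b * f (k-1) := by
    intro f
    simp only [add_mul, ite_mul, zero_mul]
    rw [Finset.sum_add_distrib, Finset.sum_ite_eq' (Finset.range k) 0 (fun i => a * f i),
      Finset.sum_ite_eq' (Finset.range k) (k-1) (fun i => b * f i)]
    simp [Finset.mem_range.2 (show 0 < k by omega), Finset.mem_range.2 (show k-1 < k by omega)]
  have key0 : ∑ i ∈ Finset.range k,
      ((if i = 0 then a else 0) + (if i = k-1 then b else 0)) = a + b := by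
    have := key (fun _ => 1)
    simpa using this
  refine ⟨fun i => (if i = 0 then a else 0) + (if i = k-1 then b else 0), ?_, ?_, ?_⟩
  · rw [key0]; exact hab
  · rw [key0, key]; exact hx1
  · rw [key0, key]; exact hy1

set_option maxHeartbeats 1600000 in
theorem comb_main : ∀ k : ℕ, ∀ x y : ℕ → ℕ, 0 < k →
    (∀ i j, i < j → j < k → x i < x j) → (∀ i j, i < j → j < k → y j < y i) →
    1 + ∑ i ∈ Finset.range (k-1), min (x (i+1) - x i) (y i - y (i+1))
      ≤ (minsP (SbF (Men k x y))).ncard := by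
  intro k
  induction k using Nat.strong_induction_on with
  | _ k IH =>
  intro x y hk hx hy
  classical
  have hNfin : (minsP (SbF (Men k x y))).Finite :=
    antichain_finite (minsP_antichain (SbF (Men k x y)))
  by_cases hk1 : k = 1
  · subst hk1
    have hp0 : ((x 0, y 0) : Pt) ∈ SbF (Men 1 x y) :=
      mem_SbF_of_le ⟨0, one_pos, rfl⟩ le_rfl
    have hmem : ((x 0, y 0) : Pt) ∈ minsP (SbF (Men 1 x y)) := by
      refine ⟨hp0, fun q hq hqle => ?_⟩
      have h1 : x 0 ≤ q.1 := SbF_fst (fun i hi => by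
        have : i = 0 := by omega
        rw [this]) hq
      have h2 : y 0 ≤ q.2 := SbF_snd (fun i hi => by
        have : i = 0 := by omega
        rw [this]) hq
      have e1 : q.1 = x 0 := le_antisymm hqle.1 h1
      have e2 : q.2 = y 0 := le_antisymm hqle.2 h2
      exact Prod.ext e1 e2
    have hpos : 0 < (minsP (SbF (Men 1 x y))).ncard := (Set.ncard_pos hNfin).2 ⟨_, hmem⟩
    simpa using (show 1 ≤ _ from hpos)
  · have hk2 : 2 ≤ k := by omega
    set α := y 0 - y (k-1) with hαdef
    set β := x (k-1) - x 0 with hβdef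
    have hxx : x 0 < x (k-1) := hx 0 (k-1) (by omega) (by omega)
    have hyy : y (k-1) < y 0 := hy 0 (k-1) (by omega) (by omega)
    have hα : 0 < α := by omega
    have hβ : 0 < β := by omega
    have hxk : x (k-1) = x 0 + β := by omega
    have hyk : y 0 = y (k-1) + α := by omega
    have hLk : α * x (k-1) + β * y (k-1) = α * x 0 + β * y 0 := by
      rw [hxk, hyk]; ring
    obtain ⟨s, hsmem, hsmin⟩ := Finset.exists_min_image (Finset.range k)
        (fun i => α * x i + β * y i) ⟨0, Finset.mem_range.2 (by omega)⟩
    have hsk : s < k := Finset.mem_range.1 hsmem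
    have hmin : ∀ i, i < k → α * x s + β * y s ≤ α * x i + β * y i :=
      fun i hi => hsmin i (Finset.mem_range.2 hi)
    by_cases hcase : α * x 0 + β * y 0 ≤ α * x s + β * y s
    · -- CASE A : everything on or above the chord
      have hline : ∀ i, i < k → α * x 0 + β * y 0 ≤ α * x i + β * y i :=
        fun i hi => le_trans hcase (hmin i hi)
      have hsumx : ∑ i ∈ Finset.range (k-1), (x (i+1) - x i) = β := by
        have := telescope_x x (k-1) (fun i hi => hx i (i+1) (by omega) (by omega))
        have hxe : x (k-1-1+1) = x (k-1) := by congr 1; omega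
        omega
      have hsumy : ∑ i ∈ Finset.range (k-1), (y i - y (i+1)) = α := by
        have := telescope_y y (k-1) (fun i hi => hy i (i+1) (by omega) (by omega))
        omega
      rcases le_or_gt β α with hba | hab
      · -- β ≤ α : use points (x 0 + j, y 0 - α*j/β) for j = 0..β
        have hkey : ∀ j, j ≤ β → ((x 0 + j, y 0 - α * j / β) : Pt) ∈ minsP (SbF (Men k x y)) := by
          intro j hj
          have hdiv1 : (α * j / β) * β ≤ α * j := Nat.div_mul_le_self _ _
          have hdiv2 : α * j < (α * j / β) * β + β := by
            have h1 := Nat.div_add_mod (α * j) β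
            have h2 := Nat.mod_lt (α * j) hβ
            have h3 : (α * j / β) * β = β * (α * j / β) := Nat.mul_comm _ _
            omega
          have hdle : α * j / β ≤ α := by
            have h1 : α * j ≤ α * β := Nat.mul_le_mul_left _ hj
            calc α * j / β ≤ α * β / β := Nat.div_le_div_right h1
            _ = α := Nat.mul_div_cancel _ hβ
          have hdy : α * j / β ≤ y 0 := by omega
          constructor
          · refine two_point_cert k x y hk2 (β - j) j _ (by omega) ?_ ?_
            · show (β - j) * x 0 + j * x (k-1) ≤ ((β - j) + j) * (x 0 + j)
              have he : (β - j) + j = β := by omega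
              rw [he, hxk]
              have : (β - j) * x 0 + j * (x 0 + β) = β * (x 0 + j) := by
                zify [hj]; ring
              omega
            · show (β - j) * y 0 + j * y (k-1) ≤ ((β - j) + j) * (y 0 - α * j / β)
              have he : (β - j) + j = β := by omega
              rw [he]
              zify [hj, hdy]
              have hyki : ((y (k-1) : ℤ)) = (y 0 : ℤ) - α := by
                have := hyk; omega
              rw [hyki]
              have hd1 : ((α * j / β : ℕ) : ℤ) * β ≤ (α : ℤ) * j := by exact_mod_cast hdiv1
              nlinarith [hd1]
          · intro q hq hqle
            have hLq : α * x 0 + β * y 0 ≤ α * q.1 + β * q.2 := SbF_line hline hq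
            have hLP : α * (x 0 + j) + β * (y 0 - α * j / β) < α * x 0 + β * y 0 + β := by
              zify [hdy]
              have hd2 : (α : ℤ) * j < ((α * j / β : ℕ) : ℤ) * β + β := by exact_mod_cast hdiv2
              nlinarith [hd2]
            have h1 : q.1 ≤ x 0 + j := hqle.1
            have h2 : q.2 ≤ y 0 - α * j / β := hqle.2
            by_contra hne
            have hne' : q.1 ≠ x 0 + j ∨ q.2 ≠ y 0 - α * j / β := by
              by_contra hc; push_neg at hc; exact hne (Prod.ext hc.1 hc.2)
            have hb1 : α * q.1 ≤ α * (x 0 + j) := Nat.mul_le_mul_left _ h1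
            have hb2 : β * q.2 ≤ β * (y 0 - α * j / β) := Nat.mul_le_mul_left _ h2
            rcases hne' with hne1 | hne2
            · have hlt : q.1 + 1 ≤ x 0 + j := by omega
              have hb1' : α * (q.1 + 1) ≤ α * (x 0 + j) := Nat.mul_le_mul_left _ hlt
              have he : α * (q.1 + 1) = α * q.1 + α := by ring
              linarith
            · have hlt : q.2 + 1 ≤ y 0 - α * j / β := by omega
              have hb2' : β * (q.2 + 1) ≤ β * (y 0 - α * j / β) := Nat.mul_le_mul_left _ hlt
              have he : β * (q.2 + 1) = β * q.2 + β := by ring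
              linarith
        set F := (Finset.range (β+1)).image (fun j => ((x 0 + j, y 0 - α * j / β) : Pt)) with hF
        have hFsub : (↑F : Set Pt) ⊆ minsP (SbF (Men k x y)) := by
          intro p hp
          rw [hF] at hp
          simp only [Finset.mem_coe, Finset.mem_image, Finset.mem_range] at hp
          obtain ⟨j, hj, rfl⟩ := hp
          exact hkey j (by omega)
        have hFcard : F.card = β + 1 := by
          rw [hF, Finset.card_image_of_injOn, Finset.card_range]
          intro a ha b hb hab
          have := congrArg Prod.fst hab
          simpa using this
        have hle : (↑F : Set Pt).ncard ≤ (minsP (SbF (Men k x y))).ncard :=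
          Set.ncard_le_ncard hFsub hNfin
        rw [Set.ncard_coe_finset, hFcard] at hle
        have hsb : ∑ i ∈ Finset.range (k-1), min (x (i+1) - x i) (y i - y (i+1)) ≤ β := by
          calc ∑ i ∈ Finset.range (k-1), min (x (i+1) - x i) (y i - y (i+1))
              ≤ ∑ i ∈ Finset.range (k-1), (x (i+1) - x i) :=
            Finset.sum_le_sum fun i _ => min_le_left _ _
          _ = β := hsumx
        omega
      · -- α < β : use points (x (k-1) - β*j/α, y (k-1) + j) for j = 0..α
        have hkey : ∀ j, j ≤ α → ((x (k-1) - β * j / α, y (k-1) + j) : Pt) ∈ minsP (SbF (Men k x y)) := by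
          intro j hj
          have hdiv1 : (β * j / α) * α ≤ β * j := Nat.div_mul_le_self _ _
          have hdiv2 : β * j < (β * j / α) * α + α := by
            have h1 := Nat.div_add_mod (β * j) α
            have h2 := Nat.mod_lt (β * j) hα
            have h3 : (β * j / α) * α = α * (β * j / α) := Nat.mul_comm _ _
            omega
          have hdle : β * j / α ≤ β := by
            have h1 : β * j ≤ β * α := Nat.mul_le_mul_left _ hj
            calc β * j / α ≤ β * α / α := Nat.div_le_div_right h1
            _ = β := Nat.mul_div_cancel _ hα
          have hdx : β * j / α ≤ x (k-1) := by omega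
          constructor
          · refine two_point_cert k x y hk2 j (α - j) _ (by omega) ?_ ?_
            · show j * x 0 + (α - j) * x (k-1) ≤ (j + (α - j)) * (x (k-1) - β * j / α)
              have he : j + (α - j) = α := by omega
              rw [he]
              zify [hj, hdx]
              have hxki : ((x 0 : ℕ) : ℤ) = (x (k-1) : ℤ) - β := by
                have := hxk; omega
              rw [hxki]
              have hd1 : ((β * j / α : ℕ) : ℤ) * α ≤ (β : ℤ) * j := by exact_mod_cast hdiv1
              nlinarith [hd1]
            · show j * y 0 + (α - j) * y (k-1) ≤ (j + (α - j)) * (y (k-1) + j)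
              have he : j + (α - j) = α := by omega
              rw [he, hyk]
              have : j * (y (k-1) + α) + (α - j) * y (k-1) = α * (y (k-1) + j) := by
                zify [hj]; ring
              omega
          · intro q hq hqle
            have hLq : α * x 0 + β * y 0 ≤ α * q.1 + β * q.2 := SbF_line hline hq
            have hLP : α * (x (k-1) - β * j / α) + β * (y (k-1) + j) < α * x 0 + β * y 0 + α := by
              zify [hdx]
              have hd2 : (β : ℤ) * j < ((β * j / α : ℕ) : ℤ) * α + α := by exact_mod_cast hdiv2
              have hxki : ((x (k-1) : ℕ) : ℤ) = (x 0 : ℤ) + β := by exact_mod_cast hxk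
              have hyki : ((y 0 : ℕ) : ℤ) = (y (k-1) : ℤ) + α := by exact_mod_cast hyk
              rw [hxki, hyki]
              nlinarith [hd2]
            have h1 : q.1 ≤ x (k-1) - β * j / α := hqle.1
            have h2 : q.2 ≤ y (k-1) + j := hqle.2
            by_contra hne
            have hne' : q.1 ≠ x (k-1) - β * j / α ∨ q.2 ≠ y (k-1) + j := by
              by_contra hc; push_neg at hc; exact hne (Prod.ext hc.1 hc.2)
            have hb1 : α * q.1 ≤ α * (x (k-1) - β * j / α) := Nat.mul_le_mul_left _ h1
            have hb2 : β * q.2 ≤ β * (y (k-1) + j) := Nat.mul_le_mul_left _ h2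
            rcases hne' with hne1 | hne2
            · have hlt : q.1 + 1 ≤ x (k-1) - β * j / α := by omega
              have hb1' : α * (q.1 + 1) ≤ α * (x (k-1) - β * j / α) := Nat.mul_le_mul_left _ hlt
              have he : α * (q.1 + 1) = α * q.1 + α := by ring
              linarith
            · have hlt : q.2 + 1 ≤ y (k-1) + j := by omega
              have hb2' : β * (q.2 + 1) ≤ β * (y (k-1) + j) := Nat.mul_le_mul_left _ hlt
              have he : β * (q.2 + 1) = β * q.2 + β := by ring
              linarith
        set F := (Finset.range (α+1)).image (fun j => ((x (k-1) - β * j / α, y (k-1) + j) : Pt)) with hF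
        have hFsub : (↑F : Set Pt) ⊆ minsP (SbF (Men k x y)) := by
          intro p hp
          rw [hF] at hp
          simp only [Finset.mem_coe, Finset.mem_image, Finset.mem_range] at hp
          obtain ⟨j, hj, rfl⟩ := hp
          exact hkey j (by omega)
        have hFcard : F.card = α + 1 := by
          rw [hF, Finset.card_image_of_injOn, Finset.card_range]
          intro a ha b hb hab
          have := congrArg Prod.snd hab
          simpa using this
        have hle : (↑F : Set Pt).ncard ≤ (minsP (SbF (Men k x y))).ncard :=
          Set.ncard_le_ncard hFsub hNfin
        rw [Set.ncard_coe_finset, hFcard] at hle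
        have hsb : ∑ i ∈ Finset.range (k-1), min (x (i+1) - x i) (y i - y (i+1)) ≤ α := by
          calc ∑ i ∈ Finset.range (k-1), min (x (i+1) - x i) (y i - y (i+1))
              ≤ ∑ i ∈ Finset.range (k-1), (y i - y (i+1)) :=
            Finset.sum_le_sum fun i _ => min_le_right _ _
          _ = α := hsumy
        omega
    · -- CASE B : a strict interior minimizer, split
      push_neg at hcase
      have hs0 : 0 < s := by
        rcases Nat.eq_zero_or_pos s with h0 | h0
        · exfalso; rw [h0] at hcase; exact lt_irrefl _ hcase
        · exact h0
      have hsk1 : s < k - 1 := by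
        rcases lt_or_eq_of_le (show s ≤ k-1 by omega) with h0 | h0
        · exact h0
        · exfalso; rw [h0, hLk] at hcase; exact lt_irrefl _ hcase
      have hx1 : ∀ i j, i < j → j < s+1 → x i < x j := fun i j h1 h2 => hx i j h1 (by omega)
      have hy1 : ∀ i j, i < j → j < s+1 → y j < y i := fun i j h1 h2 => hy i j h1 (by omega)
      have hx2 : ∀ i j, i < j → j < k - s → x (s+i) < x (s+j) :=
        fun i j h1 h2 => hx (s+i) (s+j) (by omega) (by omega)
      have hy2 : ∀ i j, i < j → j < k - s → y (s+j) < y (s+i) :=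
        fun i j h1 h2 => hy (s+i) (s+j) (by omega) (by omega)
      have hB1 := IH (s+1) (by omega) x y (by omega) hx1 hy1
      have hB2 := IH (k-s) (by omega) (fun i => x (s+i)) (fun i => y (s+i)) (by omega) hx2 hy2
      set N := minsP (SbF (Men k x y)) with hN
      set N1 := minsP (SbF (Men (s+1) x y)) with hN1def
      set N2 := minsP (SbF (Men (k-s) (fun i => x (s+i)) (fun i => y (s+i)))) with hN2def
      have hsub1 : SbF (Men (s+1) x y) ⊆ SbF (Men k x y) :=
        SbF_mono (Men_mono (by omega) x y)
      have hsub2 : SbF (Men (k-s) (fun i => x (s+i)) (fun i => y (s+i))) ⊆ SbF (Men k x y) := by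
        apply SbF_mono
        rintro p ⟨i, hi, rfl⟩
        exact ⟨s+i, by omega, rfl⟩
      have hN1y : ∀ p ∈ SbF (Men (s+1) x y), y s ≤ p.2 := by
        intro p hp
        refine SbF_snd (fun i hi => ?_) hp
        rcases Nat.eq_or_lt_of_le (show i ≤ s by omega) with h0 | h0
        · rw [h0]
        · exact le_of_lt (hy i s h0 hsk)
      have hN2x : ∀ p ∈ SbF (Men (k-s) (fun i => x (s+i)) (fun i => y (s+i))), x s ≤ p.1 := by
        intro p hp
        refine SbF_fst (fun i hi => ?_) hp
        rcases Nat.eq_zero_or_pos i with h0 | h0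
        · simp [h0]
        · exact le_of_lt (hx s (s+i) (by omega) (by omega))
      have hN1x : ∀ n ∈ N1, n.1 ≤ x s := by
        intro n hn
        by_contra hcon
        push_neg at hcon
        have hq : ((x s, n.2) : Pt) ∈ SbF (Men (s+1) x y) :=
          mem_SbF_of_le ⟨s, by omega, rfl⟩ ⟨le_rfl, hN1y n hn.1⟩
        have heq := hn.2 (x s, n.2) hq ⟨le_of_lt hcon, le_rfl⟩
        rw [← heq] at hcon
        exact lt_irrefl _ hcon
      have hN2y : ∀ n ∈ N2, n.2 ≤ y s := by
        intro n hn
        by_contra hcon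
        push_neg at hcon
        have hmem0 : ((x (s+0), y (s+0)) : Pt) ∈ Men (k-s) (fun i => x (s+i)) (fun i => y (s+i)) :=
          ⟨0, by omega, rfl⟩
        have hq : ((n.1, y s) : Pt) ∈ SbF (Men (k-s) (fun i => x (s+i)) (fun i => y (s+i))) := by
          refine mem_SbF_of_le hmem0 ?_
          constructor
          · simpa using hN2x n hn.1
          · simp
        have heq := hn.2 (n.1, y s) hq ⟨le_rfl, le_of_lt hcon⟩
        rw [← heq] at hcon
        exact lt_irrefl _ hcon
      have hmain1 : N1 ⊆ N := by
        intro n hn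
        refine ⟨hsub1 hn.1, fun q hq hqn => ?_⟩
        by_cases hq2 : y s ≤ q.2
        · exact hn.2 q (SL_left k s x y hx hy hsk α β hα hβ hmin q hq hq2) hqn
        · exfalso
          push_neg at hq2
          have hLq : α * x s + β * y s ≤ α * q.1 + β * q.2 := SbF_line hmin hq
          have hb : β * (q.2 + 1) ≤ β * y s := Nat.mul_le_mul_left _ (by omega)
          have hbe : β * (q.2 + 1) = β * q.2 + β := by ring
          have hxq : α * x s < α * q.1 := by linarith
          have hlt : x s < q.1 := lt_of_mul_lt_mul_left hxq (Nat.zero_le α)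
          have h1 := hqn.1
          have h2 := hN1x n hn
          omega
      have hmain2 : N2 ⊆ N := by
        intro n hn
        refine ⟨hsub2 hn.1, fun q hq hqn => ?_⟩
        by_cases hq1 : x s ≤ q.1
        · exact hn.2 q (SL_right k s x y hx hy hsk α β hα hβ hmin q hq hq1) hqn
        · exfalso
          push_neg at hq1
          have hLq : α * x s + β * y s ≤ α * q.1 + β * q.2 := SbF_line hmin hq
          have ha : α * (q.1 + 1) ≤ α * x s := Nat.mul_le_mul_left _ (by omega)
          have hae : α * (q.1 + 1) = α * q.1 + α := by ring
          have hyq : β * y s < β * q.2 := by linarith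
          have hlt : y s < q.2 := lt_of_mul_lt_mul_left hyq (Nat.zero_le β)
          have h2 := hqn.2
          have h3 := hN2y n hn
          omega
      have hintr : N1 ∩ N2 ⊆ {((x s, y s) : Pt)} := by
        rintro n ⟨h1, h2⟩
        have e1 : n.1 = x s := le_antisymm (hN1x n h1) (hN2x n h2.1)
        have e2 : n.2 = y s := le_antisymm (hN2y n h2) (hN1y n h1.1)
        have : n = ((x s, y s) : Pt) := Prod.ext e1 e2
        simp [this]
      have hfin1 : N1.Finite := antichain_finite (minsP_antichain _)
      have hfin2 : N2.Finite := antichain_finite (minsP_antichain _)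
      have hcup : (N1 ∪ N2).ncard + (N1 ∩ N2).ncard = N1.ncard + N2.ncard :=
        Set.ncard_union_add_ncard_inter N1 N2 hfin1 hfin2
      have hc1 : (N1 ∪ N2).ncard ≤ N.ncard :=
        Set.ncard_le_ncard (Set.union_subset hmain1 hmain2) hNfin
      have hci : (N1 ∩ N2).ncard ≤ 1 := by
        have h1 : (N1 ∩ N2).ncard ≤ ({((x s, y s) : Pt)} : Set Pt).ncard :=
          Set.ncard_le_ncard hintr (Set.finite_singleton _)
        simpa using h1
      have hsum : ∑ i ∈ Finset.range (k-1), min (x (i+1) - x i) (y i - y (i+1))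
          = (∑ i ∈ Finset.range s, min (x (i+1) - x i) (y i - y (i+1)))
            + ∑ i ∈ Finset.range (k-s-1),
                min (x (s+(i+1)) - x (s+i)) (y (s+i) - y (s+(i+1))) := by
        rw [Finset.range_eq_Ico, ← Finset.sum_Ico_consecutive _ (Nat.zero_le s) (show s ≤ k-1 by omega),
          ← Finset.range_eq_Ico]
        congr 1
        rw [Finset.sum_Ico_eq_sum_range]
        have h2 : k - 1 - s = k - s - 1 := by omega
        rw [h2]
        rfl
      have hr1 : 1 + ∑ i ∈ Finset.range s, min (x (i+1) - x i) (y i - y (i+1)) ≤ N1.ncard := by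
        simpa using hB1
      have hr2 : 1 + ∑ i ∈ Finset.range (k-s-1),
          min (x (s+(i+1)) - x (s+i)) (y (s+i) - y (s+(i+1))) ≤ N2.ncard := hB2
      omega





variable {K : Type} [Field K]

def E2 (A : Fin 2 →₀ ℕ) : Pt := (A 0, A 1)

lemma E2_inj : Function.Injective (E2) := by
  intro A B h
  ext i
  fin_cases i
  · exact congrArg Prod.fst h
  · exact congrArg Prod.snd h

lemma E2_surj : Function.Surjective (E2) := by
  intro p
  refine ⟨Finsupp.single 0 p.1 + Finsupp.single 1 p.2, ?_⟩
  unfold E2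
  simp [Finsupp.single_apply]

lemma E2_le {A B : Fin 2 →₀ ℕ} : A ≤ B ↔ E2 A ≤ E2 B := by
  rw [Finsupp.le_def, Prod.le_def]
  constructor
  · intro h; exact ⟨h 0, h 1⟩
  · intro h i
    fin_cases i
    · exact h.1
    · exact h.2

lemma E2_sum {r : ℕ} (f : Fin r → (Fin 2 →₀ ℕ)) :
    E2 (∑ j, f j) = (∑ j, (E2 (f j)).1, ∑ j, (E2 (f j)).2) := by
  unfold E2
  refine Prod.ext ?_ ?_ <;> simp [Finsupp.finset_sum_apply]

lemma E2_smul (r : ℕ) (A : Fin 2 →₀ ℕ) : E2 (r • A) = (r * A 0, r * A 1) := by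
  unfold E2
  simp

/-- monomial membership in a monomial ideal -/
lemma mono_mem_iff {G : Set (Fin 2 →₀ ℕ)} {A : Fin 2 →₀ ℕ} :
    monomial A (1:K) ∈ Ideal.span ((fun B => monomial B (1:K)) '' G) ↔ ∃ g ∈ G, g ≤ A := by
  classical
  rw [mem_ideal_span_monomial_image]
  constructor
  · intro h
    refine h A ?_
    rw [support_monomial, if_neg one_ne_zero]
    exact Finset.mem_singleton_self A
  · rintro ⟨g, hg, hle⟩ m hm
    rw [support_monomial, if_neg one_ne_zero, Finset.mem_singleton] at hm
    subst hm
    exact ⟨g, hg, hle⟩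

def SumsOf (G : Set (Fin 2 →₀ ℕ)) (r : ℕ) : Set (Fin 2 →₀ ℕ) :=
  {B | ∃ f : Fin r → (Fin 2 →₀ ℕ), (∀ j, f j ∈ G) ∧ B = ∑ j, f j}

lemma span_pow (G : Set (Fin 2 →₀ ℕ)) :
    ∀ r, (Ideal.span ((fun B => monomial B (1:K)) '' G)) ^ r
      = Ideal.span ((fun B => monomial B (1:K)) '' SumsOf G r) := by
  intro r
  induction r with
  | zero =>
    rw [pow_zero]
    have h0 : SumsOf G 0 = {0} := by
      ext B
      constructor
      · rintro ⟨f, hf, rfl⟩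
        simp
      · intro hB
        rw [Set.mem_singleton_iff] at hB
        subst hB
        exact ⟨fun j => j.elim0, fun j => j.elim0, by simp⟩
    rw [h0]
    have hm1 : monomial (0 : Fin 2 →₀ ℕ) (1:K) = 1 := by simp
    have h1 : ((fun B => monomial B (1:K)) '' {0}) = ({1} : Set (MvPolynomial (Fin 2) K)) := by
      rw [Set.image_singleton, hm1]
    rw [h1, Ideal.span_singleton_one]
    exact Ideal.one_eq_top
  | succ r ih =>
    rw [pow_succ, ih, Ideal.span_mul_span']
    congr 1
    ext p
    rw [Set.mem_mul]
    constructor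
    · rintro ⟨u, hu, v, hv, rfl⟩
      obtain ⟨Bu, hBu, rfl⟩ := hu
      obtain ⟨fu, hfu, rfl⟩ := hBu
      obtain ⟨Bv, hBv, rfl⟩ := hv
      refine ⟨(∑ j, fu j) + Bv, ⟨Fin.snoc fu Bv, ?_, ?_⟩, ?_⟩
      · intro j
        refine Fin.lastCases ?_ ?_ j
        · rw [Fin.snoc_last]; exact hBv
        · intro i; rw [Fin.snoc_castSucc]; exact hfu i
      · rw [Fin.sum_univ_castSucc]
        simp [Fin.snoc_castSucc, Fin.snoc_last]
      · rw [monomial_mul, one_mul]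
    · rintro ⟨B, ⟨f, hf, rfl⟩, rfl⟩
      refine ⟨monomial (∑ j : Fin r, f j.castSucc) 1,
        ⟨∑ j : Fin r, f j.castSucc, ⟨fun j => f j.castSucc, fun j => hf _, rfl⟩, rfl⟩,
        monomial (f (Fin.last r)) 1, ⟨f (Fin.last r), hf _, rfl⟩, ?_⟩
      rw [monomial_mul, one_mul, Fin.sum_univ_castSucc f]

lemma mono_mem_pow_iff {G : Set (Fin 2 →₀ ℕ)} {A : Fin 2 →₀ ℕ} {r : ℕ} :
    monomial A (1:K) ∈ (Ideal.span ((fun B => monomial B (1:K)) '' G)) ^ r ↔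
      ∃ g ∈ SumsOf G r, g ≤ A := by
  rw [span_pow]
  exact mono_mem_iff

lemma supp_mem_pow {G : Set (Fin 2 →₀ ℕ)} {p : MvPolynomial (Fin 2) K} {r : ℕ}
    (hp : p ∈ (Ideal.span ((fun B => monomial B (1:K)) '' G)) ^ r)
    {m : Fin 2 →₀ ℕ} (hm : m ∈ p.support) : ∃ g ∈ SumsOf G r, g ≤ m := by
  rw [span_pow, mem_ideal_span_monomial_image] at hp
  exact hp m hm


end MuProof

variable {k : Type} [Field k] {n : ℕ}

/-- An ideal of `k[x₁,…,xₙ]` is a *monomial ideal* if it is generated by monomials. -/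
def IsMonomialIdeal (I : Ideal (MvPolynomial (Fin n) k)) : Prop :=
  ∃ G : Set (Fin n →₀ ℕ), I = Ideal.span ((fun A => (monomial A (1 : k))) '' G)

/-- The integral closure of an ideal `I`, as a set: all elements `f` satisfying an
equation `f^r + a₁ f^{r-1} + ⋯ + a_r = 0` with `aᵢ ∈ Iⁱ`. -/
def intCl (I : Ideal (MvPolynomial (Fin n) k)) : Set (MvPolynomial (Fin n) k) :=
  {f | ∃ r : ℕ, 0 < r ∧ ∃ a : ℕ → MvPolynomial (Fin n) k,
    (∀ i, 1 ≤ i → i ≤ r → a i ∈ I ^ i) ∧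
    f ^ r + ∑ i ∈ Finset.Icc 1 r, a i * f ^ (r - i) = 0}

/-- The exponent vectors of the minimal monomial generators of a set `T` of polynomials:
those `A` with `x^A ∈ T` minimal in the componentwise (divisibility) order. -/
def minExps (T : Set (MvPolynomial (Fin n) k)) : Set (Fin n →₀ ℕ) :=
  {A | monomial A (1 : k) ∈ T ∧
    ∀ B : Fin n →₀ ℕ, monomial B (1 : k) ∈ T → B ≤ A → B = A}


namespace MuProof

lemma mono_mem_intCl_iff {k : Type} [Field k] {G : Set (Fin 2 →₀ ℕ)} {A : Fin 2 →₀ ℕ} :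
    monomial A (1:k) ∈ intCl (Ideal.span ((fun B => monomial B (1:k)) '' G)) ↔
      ∃ r, 0 < r ∧ ∃ g ∈ SumsOf G r, g ≤ r • A := by
  classical
  constructor
  · rintro ⟨r, hr, a, ha, heq⟩
    have hf : ∀ m : ℕ, (monomial A (1:k)) ^ m = monomial (m • A) 1 := by
      intro m
      rw [monomial_pow, one_pow]
    have hterm : ∀ i ∈ Finset.Icc 1 r,
        coeff (r • A) (a i * (monomial A (1:k)) ^ (r - i)) = coeff (i • A) (a i) := by
      intro i hi
      rw [Finset.mem_Icc] at hi
      rw [hf]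
      have hsplit : r • A = i • A + (r - i) • A := by
        rw [← add_smul]
        congr 1
        omega
      rw [hsplit, coeff_mul_monomial, mul_one]
    have hco := congrArg (coeff (r • A)) heq
    rw [coeff_add, coeff_zero, coeff_sum, Finset.sum_congr rfl hterm, hf, coeff_monomial,
      if_pos rfl] at hco
    have hex : ∃ i ∈ Finset.Icc 1 r, coeff (i • A) (a i) ≠ 0 := by
      by_contra hcon
      push_neg at hcon
      rw [Finset.sum_eq_zero hcon, add_zero] at hco
      exact one_ne_zero hco
    obtain ⟨i, hi, hne⟩ := hex
    rw [Finset.mem_Icc] at hi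
    obtain ⟨g, hg, hle⟩ := supp_mem_pow (ha i hi.1 hi.2) (mem_support_iff.2 hne)
    exact ⟨i, hi.1, g, hg, hle⟩
  · rintro ⟨r, hr, g, hg, hle⟩
    refine ⟨r, hr, fun i => if i = r then -(monomial (r • A) (1:k)) else 0, ?_, ?_⟩
    · intro i h1 h2
      dsimp only
      by_cases h : i = r
      · subst h
        rw [if_pos rfl]
        refine neg_mem ?_
        rw [mono_mem_pow_iff]
        exact ⟨g, hg, hle⟩
      · rw [if_neg h]
        exact zero_mem _
    · have hf : (monomial A (1:k)) ^ r = monomial (r • A) 1 := by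
        rw [monomial_pow, one_pow]
      have hsum : ∑ i ∈ Finset.Icc 1 r,
          (if i = r then -(monomial (r • A) (1:k)) else 0) * (monomial A (1:k)) ^ (r - i)
          = -(monomial (r • A) (1:k)) := by
        rw [Finset.sum_eq_single r]
        · rw [if_pos rfl, Nat.sub_self, pow_zero, mul_one]
        · intro b hb hbne
          rw [if_neg hbne, zero_mul]
        · intro hrr
          exact absurd (Finset.mem_Icc.2 ⟨hr, le_rfl⟩) hrr
      rw [hsum, hf]
      ring

end MuProof

set_option maxHeartbeats 1600000 in
/-- For a monomial ideal `I` of `k[x,y]`, the minimal number of monomial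
generators satisfies `μ(I) ≤ μ(Ī)`, where `Ī` is the integral closure of `I`. -/
theorem two_variables_mu_le_mu_intCl (I : Ideal (MvPolynomial (Fin 2) k))
    (hI : IsMonomialIdeal I) :
    (minExps (I : Set (MvPolynomial (Fin 2) k))).ncard ≤ (minExps (intCl I)).ncard := by
  classical
  obtain ⟨G, rfl⟩ := hI
  set Isp := Ideal.span ((fun A => monomial A (1:k)) '' G) with hIsp
  set U' := MuProof.USet (MuProof.E2 '' G) with hU'
  set Sb' := MuProof.SbF (MuProof.E2 '' G) with hSb'
  have hU : ∀ A : Fin 2 →₀ ℕ, (monomial A (1:k) ∈ Isp ↔ MuProof.E2 A ∈ U') := by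
    intro A
    rw [hIsp, MuProof.mono_mem_iff]
    constructor
    · rintro ⟨g, hg, hle⟩
      exact ⟨MuProof.E2 g, ⟨g, hg, rfl⟩, MuProof.E2_le.1 hle⟩
    · rintro ⟨p, ⟨g, hg, rfl⟩, hle⟩
      exact ⟨g, hg, MuProof.E2_le.2 hle⟩
  have hS : ∀ A : Fin 2 →₀ ℕ, (monomial A (1:k) ∈ intCl Isp ↔ MuProof.E2 A ∈ Sb') := by
    intro A
    rw [hIsp, MuProof.mono_mem_intCl_iff]
    constructor
    · rintro ⟨r, hr, g, ⟨f, hf, rfl⟩, hle⟩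
      refine ⟨r, hr, fun j => MuProof.E2 (f j), fun j => ⟨f j, hf j, rfl⟩, ?_, ?_⟩
      · calc (∑ j, (MuProof.E2 (f j)).1) = (∑ j, f j) 0 := by
              rw [Finsupp.finset_sum_apply]
              rfl
        _ ≤ (r • A) 0 := Finsupp.le_def.1 hle 0
        _ = r * (MuProof.E2 A).1 := by rw [Finsupp.smul_apply]; rfl
      · calc (∑ j, (MuProof.E2 (f j)).2) = (∑ j, f j) 1 := by
              rw [Finsupp.finset_sum_apply]
              rfl
        _ ≤ (r • A) 1 := Finsupp.le_def.1 hle 1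
        _ = r * (MuProof.E2 A).2 := by rw [Finsupp.smul_apply]; rfl
    · rintro ⟨r, hr, F, hF, h1, h2⟩
      have hFc : ∀ j, ∃ g, g ∈ G ∧ MuProof.E2 g = F j := by
        intro j
        obtain ⟨g, hg, hEg⟩ := hF j
        exact ⟨g, hg, hEg⟩
      choose f hf hEf using hFc
      refine ⟨r, hr, ∑ j, f j, ⟨f, hf, rfl⟩, ?_⟩
      rw [Finsupp.le_def]
      intro s
      rw [Finsupp.finset_sum_apply, Finsupp.smul_apply, smul_eq_mul]
      fin_cases s
      · calc ∑ j, f j 0 = ∑ j, (F j).1 := Finset.sum_congr rfl fun j _ => by rw [← hEf j]; rfl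
        _ ≤ r * (MuProof.E2 A).1 := h1
        _ = r * A 0 := rfl
      · calc ∑ j, f j 1 = ∑ j, (F j).2 := Finset.sum_congr rfl fun j _ => by rw [← hEf j]; rfl
        _ ≤ r * (MuProof.E2 A).2 := h2
        _ = r * A 1 := rfl
  have h1img : MuProof.E2 '' (minExps (Isp : Set (MvPolynomial (Fin 2) k))) = MuProof.minsP U' := by
    ext p
    constructor
    · rintro ⟨A, ⟨hA, hAmin⟩, rfl⟩
      refine ⟨(hU A).1 hA, ?_⟩
      intro q hq hqle
      obtain ⟨B, rfl⟩ := MuProof.E2_surj q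
      rw [hAmin B ((hU B).2 hq) (MuProof.E2_le.2 hqle)]
    · rintro ⟨hp, hpmin⟩
      obtain ⟨A, rfl⟩ := MuProof.E2_surj p
      refine ⟨A, ⟨(hU A).2 hp, ?_⟩, rfl⟩
      intro B hB hBA
      exact MuProof.E2_inj (hpmin (MuProof.E2 B) ((hU B).1 hB) (MuProof.E2_le.1 hBA))
  have h2img : MuProof.E2 '' (minExps (intCl Isp)) = MuProof.minsP Sb' := by
    ext p
    constructor
    · rintro ⟨A, ⟨hA, hAmin⟩, rfl⟩
      refine ⟨(hS A).1 hA, ?_⟩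
      intro q hq hqle
      obtain ⟨B, rfl⟩ := MuProof.E2_surj q
      rw [hAmin B ((hS B).2 hq) (MuProof.E2_le.2 hqle)]
    · rintro ⟨hp, hpmin⟩
      obtain ⟨A, rfl⟩ := MuProof.E2_surj p
      refine ⟨A, ⟨(hS A).2 hp, ?_⟩, rfl⟩
      intro B hB hBA
      exact MuProof.E2_inj (hpmin (MuProof.E2 B) ((hS B).1 hB) (MuProof.E2_le.1 hBA))
  rw [← Set.ncard_image_of_injective (minExps (Isp : Set (MvPolynomial (Fin 2) k))) MuProof.E2_inj,
    ← Set.ncard_image_of_injective (minExps (intCl Isp)) MuProof.E2_inj, h1img, h2img]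
  rcases Set.eq_empty_or_nonempty (MuProof.minsP U') with hM0 | hMne
  · rw [hM0]
    simp
  · have hanti := MuProof.minsP_antichain U'
    have hMfin : (MuProof.minsP U').Finite := MuProof.antichain_finite hanti
    set MF := hMfin.toFinset with hMFdef
    have hMFcoe : (↑MF : Set MuProof.Pt) = MuProof.minsP U' := hMfin.coe_toFinset
    have hMFne : MF.Nonempty := by
      rw [← Finset.coe_nonempty, hMFcoe]
      exact hMne
    have hinjF : Set.InjOn Prod.fst (↑MF : Set MuProof.Pt) := by
      intro p hp q hq h
      rw [hMFcoe] at hp hq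
      rcases le_total p.2 q.2 with h2 | h2
      · exact hanti p hp q hq ⟨le_of_eq h, h2⟩
      · exact (hanti q hq p hp ⟨le_of_eq h.symm, h2⟩).symm
    set k0 := MF.card with hk0def
    have hk0 : 0 < k0 := Finset.card_pos.2 hMFne
    have hXcard : (MF.image Prod.fst).card = k0 := by
      rw [hk0def]
      exact Finset.card_image_of_injOn hinjF
    set oi := (MF.image Prod.fst).orderIsoOfFin hXcard with hoi
    set xf : ℕ → ℕ := fun i => if h : i < k0 then (oi ⟨i, h⟩ : ℕ) else 0 with hxf
    have hchoose : ∀ i : ℕ, i < k0 → ∃! m, m ∈ MF ∧ m.1 = xf i := by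
      intro i hi
      have hxi : xf i ∈ MF.image Prod.fst := by
        simp only [hxf]
        rw [dif_pos hi]
        exact (oi ⟨i, hi⟩).2
      obtain ⟨m, hm, hm1⟩ := Finset.mem_image.1 hxi
      refine ⟨m, ⟨hm, hm1⟩, ?_⟩
      rintro m' ⟨hm', hm1'⟩
      exact hinjF (Finset.mem_coe.2 hm') (Finset.mem_coe.2 hm) (by rw [hm1, hm1'])
    set yf : ℕ → ℕ := fun i => if h : i < k0 then
        (MF.choose (fun m => m.1 = xf i) (hchoose i h)).2 else 0 with hyf
    have hmemi : ∀ i, i < k0 → ((xf i, yf i) : MuProof.Pt) ∈ MF := by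
      intro i hi
      have h1 := Finset.choose_mem (fun m => m.1 = xf i) MF (hchoose i hi)
      have h2 := Finset.choose_property (fun m => m.1 = xf i) MF (hchoose i hi)
      have he : ((xf i, yf i) : MuProof.Pt) = MF.choose (fun m => m.1 = xf i) (hchoose i hi) := by
        simp only [hyf]
        rw [dif_pos hi]
        exact Prod.ext h2.symm rfl
      rw [he]
      exact h1
    have hsurj : ∀ m ∈ MF, ∃ i, i < k0 ∧ m = (xf i, yf i) := by
      intro m hm
      have hm1 : m.1 ∈ MF.image Prod.fst := Finset.mem_image_of_mem _ hm
      refine ⟨(oi.symm ⟨m.1, hm1⟩ : Fin k0), (oi.symm ⟨m.1, hm1⟩).2, ?_⟩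
      have hxj : xf ((oi.symm ⟨m.1, hm1⟩ : Fin k0) : ℕ) = m.1 := by
        simp only [hxf]
        rw [dif_pos (oi.symm ⟨m.1, hm1⟩).2]
        have h5 : oi ⟨((oi.symm ⟨m.1, hm1⟩ : Fin k0) : ℕ), (oi.symm ⟨m.1, hm1⟩).2⟩
            = ⟨m.1, hm1⟩ := by
          have h6 : (⟨((oi.symm ⟨m.1, hm1⟩ : Fin k0) : ℕ), (oi.symm ⟨m.1, hm1⟩).2⟩ : Fin k0)
              = oi.symm ⟨m.1, hm1⟩ := rfl
          rw [h6, OrderIso.apply_symm_apply]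
        rw [h5]
      exact (hchoose _ (oi.symm ⟨m.1, hm1⟩).2).unique ⟨hm, hxj.symm⟩
        ⟨hmemi _ (oi.symm ⟨m.1, hm1⟩).2, rfl⟩
    have hxmono : ∀ i j, i < j → j < k0 → xf i < xf j := by
      intro i j hij hj
      simp only [hxf]
      rw [dif_pos (show i < k0 by omega), dif_pos hj]
      have hlt : (⟨i, by omega⟩ : Fin k0) < ⟨j, hj⟩ := by
        rw [Fin.lt_def]
        exact hij
      exact Subtype.coe_lt_coe.2 (oi.strictMono hlt)
    have hymono : ∀ i j, i < j → j < k0 → yf j < yf i := by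
      intro i j hij hj
      have hmi := hmemi i (by omega)
      have hmj := hmemi j hj
      have hxij := hxmono i j hij hj
      by_contra hcon
      push_neg at hcon
      have hle : ((xf i, yf i) : MuProof.Pt) ≤ (xf j, yf j) := ⟨le_of_lt hxij, hcon⟩
      have heq := hanti _ (by rw [← hMFcoe]; exact Finset.mem_coe.2 hmi)
        _ (by rw [← hMFcoe]; exact Finset.mem_coe.2 hmj) hle
      have := congrArg Prod.fst heq
      simp only [] at this
      omega
    have hMen : MuProof.Men k0 xf yf = MuProof.minsP U' := by
      rw [← hMFcoe]
      ext p
      constructor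
      · rintro ⟨i, hi, rfl⟩
        exact Finset.mem_coe.2 (hmemi i hi)
      · intro hp
        obtain ⟨i, hi, he⟩ := hsurj p (Finset.mem_coe.1 hp)
        exact ⟨i, hi, he⟩
    have hSbeq : MuProof.minsP Sb' = MuProof.minsP (MuProof.SbF (MuProof.Men k0 xf yf)) := by
      rw [hMen, hU', hSb']
      rw [MuProof.SbF_eq_of_mins (MuProof.E2 '' G)]
    have hcomb := MuProof.comb_main k0 xf yf hk0 hxmono hymono
    have hterm : ∀ i ∈ Finset.range (k0-1), 1 ≤ min (xf (i+1) - xf i) (yf i - yf (i+1)) := by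
      intro i hi
      rw [Finset.mem_range] at hi
      have h1 := hxmono i (i+1) (by omega) (by omega)
      have h2 := hymono i (i+1) (by omega) (by omega)
      rw [le_min_iff]
      omega
    have hsum : k0 - 1 ≤ ∑ i ∈ Finset.range (k0-1), min (xf (i+1) - xf i) (yf i - yf (i+1)) := by
      calc k0 - 1 = ∑ _i ∈ Finset.range (k0-1), 1 := by
            rw [Finset.sum_const, Finset.card_range, smul_eq_mul, mul_one]
      _ ≤ _ := Finset.sum_le_sum hterm
    have hMcard : (MuProof.minsP U').ncard = k0 := by
      rw [← hMFcoe, Set.ncard_coe_finset, hk0def]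
    rw [hMcard, hSbeq]
    omega
end

section
/- For the ideal I = ⟨x^5, y^5, z^5, x^4y^2, x^4yz, x^4z^2, x^3y^3, x^3y^2z, x^3yz^2, x^3z^3, x^2y^4, x^2y^3z, x^2y^2z^2, x^2yz^3, x^4z^4, xy^4z, xy^3z^2, xy^2z^3, xyz^4, y^4z^2, y^3z^3, y^2z^4⟩ in k[x,y,z], the integral closure of I equals ⟨x, y, z⟩^5. -/
open MvPolynomial

variable {k : Type} [Field k] {n : ℕ}

section Aux
variable {k : Type} [Field k]

noncomputable def Jid (k : Type) [Field k] : Ideal (MvPolynomial (Fin 3) k) :=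
  Ideal.span {X 0, X 1, X 2}

lemma deg_add (A B : Fin 3 →₀ ℕ) : (A + B).degree = A.degree + B.degree := by
  simp only [Finsupp.degree_eq_weight_one, map_add]

lemma deg_single (i : Fin 3) (b : ℕ) : (Finsupp.single i b).degree = b := by
  rcases eq_or_ne b 0 with rfl | hb
  · simp [Finsupp.degree]
  · exact Finsupp.degree_single i b

lemma deg_mono {A B : Fin 3 →₀ ℕ} (h : A ≤ B) : A.degree ≤ B.degree := by
  obtain ⟨C, rfl⟩ := exists_add_of_le h
  rw [deg_add]; exact Nat.le_add_right _ _

lemma X_mem_Jid (i : Fin 3) : (X i : MvPolynomial (Fin 3) k) ∈ Jid k := by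
  fin_cases i <;> exact Ideal.subset_span (by simp)

lemma mon_mem_Jid (A : Fin 3 →₀ ℕ) :
    (monomial A (1 : k)) ∈ Jid k ^ A.degree := by
  induction A using Finsupp.induction with
  | zero => simp [Ideal.one_eq_top]
  | single_add a b f _ _ ih =>
      have hsplit : (monomial (Finsupp.single a b + f)) (1 : k)
          = (monomial (Finsupp.single a b) 1) * monomial f 1 := by
        rw [monomial_mul, one_mul]
      rw [deg_add, deg_single, hsplit, ← X_pow_eq_monomial, pow_add]
      exact Ideal.mul_mem_mul (Ideal.pow_mem_pow (X_mem_Jid a) b) ih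

noncomputable def Kid (k : Type) [Field k] (m : ℕ) : Ideal (MvPolynomial (Fin 3) k) :=
  Ideal.span ((fun A => monomial A (1 : k)) '' {A | m ≤ A.degree})

lemma Jid_pow_eq_Kid (m : ℕ) : Jid k ^ m = Kid k m := by
  apply le_antisymm
  · induction m with
    | zero =>
        rw [pow_zero, Ideal.one_eq_top]
        intro f _
        have h1 : (1 : MvPolynomial (Fin 3) k) ∈ Kid k 0 := by
          apply Ideal.subset_span
          exact ⟨0, by simp, by simp⟩
        simpa using Ideal.mul_mem_left _ f h1
    | succ m ih =>
        rw [pow_succ]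
        calc Jid k ^ m * Jid k ≤ Kid k m * Jid k := Ideal.mul_mono_left ih
          _ ≤ Kid k (m + 1) := by
            rw [Kid, Jid, Ideal.span_mul_span']
            rw [Ideal.span_le]
            rintro _ ⟨p, ⟨A, hA, rfl⟩, q, hq, rfl⟩
            have : ∃ i : Fin 3, q = X i := by
              rcases hq with rfl | rfl | rfl
              exacts [⟨0, rfl⟩, ⟨1, rfl⟩, ⟨2, rfl⟩]
            obtain ⟨i, rfl⟩ := this
            apply Ideal.subset_span
            simp only [Set.mem_setOf_eq] at hA
            refine ⟨A + Finsupp.single i 1, ?_, ?_⟩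
            · simp only [Set.mem_setOf_eq, deg_add, deg_single]
              omega
            · simp only [X]
              rw [monomial_mul, one_mul]
  · rw [Kid, Ideal.span_le]
    rintro _ ⟨A, hA, rfl⟩
    exact Ideal.pow_le_pow_right hA (mon_mem_Jid A)

lemma mem_Jid_pow_iff {f : MvPolynomial (Fin 3) k} {m : ℕ} :
    f ∈ Jid k ^ m ↔ ∀ u ∈ f.support, m ≤ u.degree := by
  rw [Jid_pow_eq_Kid, Kid, mem_ideal_span_monomial_image]
  constructor
  · intro h u hu
    obtain ⟨A, hA, hle⟩ := h u hu
    exact hA.trans (deg_mono hle)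
  · intro h u hu
    exact ⟨u, h u hu, le_refl u⟩

lemma exists_big_exp {A : Fin 3 →₀ ℕ} (h : 13 ≤ A.degree) : ∃ i, 5 ≤ A i := by
  by_contra hc
  push_neg at hc
  have h1 : A.degree ≤ ∑ i : Fin 3, A i := by
    rw [Finsupp.degree]
    exact Finset.sum_le_sum_of_subset (Finset.subset_univ _)
  have h2 : ∑ i : Fin 3, A i = A 0 + A 1 + A 2 := Fin.sum_univ_three _
  have := hc 0; have := hc 1; have := hc 2
  omega

lemma pow15_le (I : Ideal (MvPolynomial (Fin 3) k))
    (h5 : ∀ i : Fin 3, (X i : MvPolynomial (Fin 3) k) ^ 5 ∈ I) :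
    Jid k ^ 15 ≤ I * Jid k ^ 10 := by
  rw [Jid_pow_eq_Kid 15, Kid, Ideal.span_le]
  rintro _ ⟨A, hA, rfl⟩
  simp only [Set.mem_setOf_eq] at hA
  obtain ⟨i, hi⟩ := exists_big_exp (A := A) (by omega)
  have hle : Finsupp.single i 5 ≤ A := Finsupp.single_le_iff.mpr hi
  have hAB : Finsupp.single i 5 + (A - Finsupp.single i 5) = A := add_tsub_cancel_of_le hle
  have hdeg : 10 ≤ (A - Finsupp.single i 5).degree := by
    have := deg_add (Finsupp.single i 5) (A - Finsupp.single i 5)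
    rw [hAB, deg_single] at this
    omega
  have hsplit : (monomial A) (1 : k)
      = (X i) ^ 5 * monomial (A - Finsupp.single i 5) 1 := by
    rw [X_pow_eq_monomial, monomial_mul, one_mul, hAB]
  show (monomial A) (1 : k) ∈ I * Jid k ^ 10
  rw [hsplit]
  exact Ideal.mul_mem_mul (h5 i)
    (Ideal.pow_le_pow_right hdeg (mon_mem_Jid _))

set_option maxHeartbeats 1000000 in
set_option synthInstance.maxHeartbeats 200000 in
lemma mem_intCl_of_smul (I N : Ideal (MvPolynomial (Fin 3) k)) (hN : N ≠ ⊥)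
    (f : MvPolynomial (Fin 3) k) (h : ∀ v ∈ N, f * v ∈ I * N) :
    f ∈ intCl I := by
  classical
  have hmem : ∀ v : N, f * (v : MvPolynomial (Fin 3) k) ∈ N :=
    fun v => Ideal.mul_le_right (h v v.2)
  let φ : N →ₗ[MvPolynomial (Fin 3) k] N :=
    { toFun := fun v => ⟨f * v, hmem v⟩
      map_add' := by intro a b; apply Subtype.ext; simp [mul_add]
      map_smul' := by
        intro c v; apply Subtype.ext
        simp only [SetLike.val_smul, smul_eq_mul, RingHom.id_apply]
        ring }
  haveI : Module.Finite (MvPolynomial (Fin 3) k) N :=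
    Module.Finite.iff_fg.mpr (IsNoetherian.noetherian N)
  have hrange : LinearMap.range φ ≤ I • (⊤ : Submodule (MvPolynomial (Fin 3) k) N) := by
    rintro w ⟨v, rfl⟩
    rw [Submodule.mem_smul_top_iff]
    show f * (v : MvPolynomial (Fin 3) k) ∈ I • N
    rw [Ideal.smul_eq_mul]
    exact h v v.2
  obtain ⟨p, hmonic, -, hcoeff, heval⟩ :=
    LinearMap.exists_monic_and_coeff_mem_pow_and_aeval_eq_zero_of_range_le_smul
      (MvPolynomial (Fin 3) k) φ I hrange
  have hpow : ∀ (m : ℕ) (v : N), (((φ ^ m) v : N) : MvPolynomial (Fin 3) k) = f ^ m * v := by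
    intro m
    induction m with
    | zero => intro v; simp
    | succ m ih =>
        intro v
        rw [pow_succ, Module.End.mul_apply, ih]
        show f ^ m * (f * (v : MvPolynomial (Fin 3) k)) = f ^ (m + 1) * v
        ring
  have haeval : ∀ (q : Polynomial (MvPolynomial (Fin 3) k)) (v : N),
      (((Polynomial.aeval φ q) v : N) : MvPolynomial (Fin 3) k) = q.eval f * v := by
    intro q
    induction q using Polynomial.induction_on' with
    | add p q hp hq =>
        intro v
        simp only [map_add, LinearMap.add_apply, Polynomial.eval_add, Submodule.coe_add]
        rw [hp v, hq v]; ring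
    | monomial m a =>
        intro v
        rw [Polynomial.aeval_monomial, Module.End.mul_apply, Polynomial.eval_monomial]
        have : ((algebraMap (MvPolynomial (Fin 3) k) (Module.End (MvPolynomial (Fin 3) k) N) a)
            ((φ ^ m) v)) = a • ((φ ^ m) v) := by
          rw [Module.algebraMap_end_apply]
        rw [this]
        push_cast
        rw [hpow]
        show a * (f ^ m * (v : MvPolynomial (Fin 3) k)) = a * f ^ m * v
        ring
  obtain ⟨v0, hv0N, hv00⟩ := Submodule.exists_mem_ne_zero_of_ne_bot hN
  have hpf : p.eval f = 0 := by
    have h0 : (((Polynomial.aeval φ p) ⟨v0, hv0N⟩ : N) : MvPolynomial (Fin 3) k) = 0 := by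
      rw [heval]; rfl
    rw [haeval] at h0
    rcases mul_eq_zero.mp h0 with h | h
    · exact h
    · exact absurd h hv00
  -- build the integral equation from q := p * X
  have hp0 : p ≠ 0 := hmonic.ne_zero
  set q : Polynomial (MvPolynomial (Fin 3) k) := p * Polynomial.X with hqdef
  set r : ℕ := p.natDegree + 1 with hrdef
  have hqdeg : q.natDegree = r := Polynomial.natDegree_mul_X hp0
  have hqmonic : q.Monic := hmonic.mul Polynomial.monic_X
  refine ⟨r, Nat.succ_pos _, fun i => q.coeff (r - i), ?_, ?_⟩
  · intro i h1i hir
    show q.coeff (r - i) ∈ I ^ i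
    rcases eq_or_lt_of_le hir with rfl | hlt
    · simp only [Nat.sub_self, hqdef, Polynomial.coeff_mul_X_zero]
      exact zero_mem _
    · have hi : i ≤ p.natDegree := by omega
      have hsub : r - i = (p.natDegree - i) + 1 := by omega
      rw [hsub, hqdef, Polynomial.coeff_mul_X]
      have := hcoeff (p.natDegree - i)
      rwa [show p.natDegree - (p.natDegree - i) = i from by omega] at this
  · have hq0 : q.eval f = 0 := by
      rw [hqdef, Polynomial.eval_mul, Polynomial.eval_X, hpf, zero_mul]
    rw [Polynomial.eval_eq_sum_range, hqdeg, Finset.sum_range_succ] at hq0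
    have hlead : q.coeff r = 1 := by
      rw [← hqdeg]; exact hqmonic.coeff_natDegree
    rw [hlead, one_mul] at hq0
    have hsum : ∑ i ∈ Finset.Icc 1 r, q.coeff (r - i) * f ^ (r - i)
        = ∑ i ∈ Finset.range r, q.coeff i * f ^ i := by
      refine Finset.sum_bij' (i := fun a _ => r - a) (j := fun a _ => r - a)
        ?_ ?_ ?_ ?_ ?_
      · intro a ha
        simp only [Finset.mem_Icc] at ha
        simp only [Finset.mem_range]; omega
      · intro a ha
        simp only [Finset.mem_range] at ha
        simp only [Finset.mem_Icc]; omega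
      · intro a ha
        simp only [Finset.mem_Icc] at ha
        show r - (r - a) = a
        omega
      · intro a ha
        simp only [Finset.mem_range] at ha
        show r - (r - a) = a
        omega
      · intro a ha; rfl
    rw [hsum]
    linear_combination hq0

lemma K5_subset_intCl (I : Ideal (MvPolynomial (Fin 3) k))
    (h5 : ∀ i : Fin 3, (X i : MvPolynomial (Fin 3) k) ^ 5 ∈ I) :
    ∀ f ∈ Jid k ^ 5, f ∈ intCl I := by
  intro f hf
  apply mem_intCl_of_smul I (Jid k ^ 10)
  · intro hbot
    have hx : (X 0 : MvPolynomial (Fin 3) k) ^ 10 ∈ Jid k ^ 10 :=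
      Ideal.pow_mem_pow (X_mem_Jid 0) 10
    rw [hbot, Ideal.mem_bot] at hx
    exact pow_ne_zero 10 (MvPolynomial.X_ne_zero (s := 0)) hx
  · intro v hv
    have h15 : f * v ∈ Jid k ^ 15 := by
      have := Ideal.mul_mem_mul hf hv
      rwa [← pow_add] at this
    exact pow15_le I h5 h15

lemma intCl_subset_K5 (I : Ideal (MvPolynomial (Fin 3) k)) (hIJ : I ≤ Jid k ^ 5) :
    ∀ f, f ∈ intCl I → f ∈ Jid k ^ 5 := by
  rintro f ⟨r, hr, a, ha, heq⟩
  by_cases hf5 : f ∈ Jid k ^ 5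
  · exact hf5
  exfalso
  have hf0 : f ≠ 0 := fun h0 => hf5 (h0 ▸ zero_mem _)
  obtain ⟨m0, hm0, hmin⟩ :=
    Finset.exists_min_image f.support Finsupp.degree (support_nonempty.mpr hf0)
  set d := m0.degree with hd
  have hd5 : d < 5 := by
    by_contra hge
    push_neg at hge
    exact hf5 (mem_Jid_pow_iff.mpr fun u hu => le_trans hge (hmin u hu))
  set h := homogeneousComponent d f with hhdef
  have hh0 : h ≠ 0 := by
    intro h0
    have hc := coeff_homogeneousComponent d f m0
    rw [← hhdef, h0, if_pos rfl] at hc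
    exact MvPolynomial.mem_support_iff.mp hm0 hc.symm
  have hfd : f ∈ Jid k ^ d := mem_Jid_pow_iff.mpr fun u hu => hmin u hu
  have hsub : f - h ∈ Jid k ^ (d + 1) := by
    apply mem_Jid_pow_iff.mpr
    intro u hu
    rw [MvPolynomial.mem_support_iff, MvPolynomial.coeff_sub, hhdef,
      coeff_homogeneousComponent] at hu
    by_cases hud : u.degree = d
    · rw [if_pos hud, sub_self] at hu
      exact absurd rfl hu
    · rw [if_neg hud, sub_zero] at hu
      have : d ≤ u.degree := hmin u (MvPolynomial.mem_support_iff.mpr hu)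
      omega
  have hhd : h ∈ Jid k ^ d := by
    have hrw : h = f - (f - h) := by ring
    rw [hrw]
    exact sub_mem hfd (Ideal.pow_le_pow_right (Nat.le_succ d) hsub)
  have P : ∀ j : ℕ, f ^ j - h ^ j ∈ Jid k ^ (d * j + 1) := by
    intro j
    induction j with
    | zero => simp
    | succ j ih =>
        have key : f ^ (j + 1) - h ^ (j + 1)
            = f * (f ^ j - h ^ j) + (f - h) * h ^ j := by ring
        rw [key]
        apply add_mem
        · have hm := Ideal.mul_mem_mul hfd ih
          rw [← pow_add] at hm
          have he : d + (d * j + 1) = d * (j + 1) + 1 := by ring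
          rwa [he] at hm
        · have hpj : h ^ j ∈ Jid k ^ (d * j) := by
            have := Ideal.pow_mem_pow hhd j
            rwa [← pow_mul] at this
          have hm := Ideal.mul_mem_mul hsub hpj
          rw [← pow_add] at hm
          have he : d + 1 + d * j = d * (j + 1) + 1 := by ring
          rwa [he] at hm
  have hfr : f ^ r ∈ Jid k ^ (d * r + 1) := by
    have heq' : f ^ r = -∑ i ∈ Finset.Icc 1 r, a i * f ^ (r - i) := by
      linear_combination heq
    rw [heq']
    apply neg_mem
    apply Ideal.sum_mem
    intro i hi
    rw [Finset.mem_Icc] at hi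
    have hai : a i ∈ Jid k ^ (5 * i) := by
      have := Ideal.pow_right_mono hIJ i (ha i hi.1 hi.2)
      rwa [← pow_mul] at this
    have hfi : f ^ (r - i) ∈ Jid k ^ (d * (r - i)) := by
      have := Ideal.pow_mem_pow hfd (r - i)
      rwa [← pow_mul] at this
    have hm := Ideal.mul_mem_mul hai hfi
    rw [← pow_add] at hm
    refine Ideal.pow_le_pow_right ?_ hm
    have h2 : d * (r - i) + d * i = d * r := by
      rw [← Nat.mul_add]
      congr 1
      omega
    have h3 : d * i ≤ 4 * i := Nat.mul_le_mul_right i (by omega)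
    omega
  have hhr : h ^ r ∈ Jid k ^ (d * r + 1) := by
    have hrw : h ^ r = f ^ r - (f ^ r - h ^ r) := by ring
    rw [hrw]
    exact sub_mem hfr (P r)
  have hhom : (h ^ r).IsHomogeneous (d * r) :=
    (homogeneousComponent_isHomogeneous d f).pow r
  obtain ⟨u, hu⟩ := support_nonempty.mpr (pow_ne_zero r hh0)
  have hdeg : u.degree = d * r := by
    have := hhom (MvPolynomial.mem_support_iff.mp hu)
    rw [Finsupp.degree_eq_weight_one]; exact this
  have := mem_Jid_pow_iff.mp hhr u hu
  omega


lemma mon_prod_mem (a b c : ℕ) (h : 5 ≤ a + b + c) :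
    (X 0 : MvPolynomial (Fin 3) k) ^ a * X 1 ^ b * X 2 ^ c ∈ Jid k ^ 5 := by
  apply Ideal.pow_le_pow_right h
  have := Ideal.mul_mem_mul (Ideal.mul_mem_mul
    (Ideal.pow_mem_pow (X_mem_Jid (k := k) 0) a)
    (Ideal.pow_mem_pow (X_mem_Jid (k := k) 1) b))
    (Ideal.pow_mem_pow (X_mem_Jid (k := k) 2) c)
  rwa [← pow_add, ← pow_add] at this

end Aux

set_option maxHeartbeats 4000000 in
/-- **Example.** For the ideal
`I = ⟨x⁵, y⁵, z⁵, x⁴y², x⁴yz, x⁴z², x³y³, x³y²z, x³yz², x³z³, x²y⁴, x²y³z, x²y²z², x²yz³,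
x⁴z⁴, xy⁴z, xy³z², xy²z³, xyz⁴, y⁴z², y³z³, y²z⁴⟩` of `k[x,y,z]`, the integral closure of
`I` equals `⟨x,y,z⟩⁵`. (Here `x = X 0`, `y = X 1`, `z = X 2`.) -/
theorem example_intCl_eq_pow_five
    (x y z : MvPolynomial (Fin 3) k) (hx : x = X 0) (hy : y = X 1) (hz : z = X 2)
    (I : Ideal (MvPolynomial (Fin 3) k))
    (hI : I = Ideal.span
      {x^5, y^5, z^5, x^4*y^2, x^4*y*z, x^4*z^2, x^3*y^3, x^3*y^2*z, x^3*y*z^2, x^3*z^3,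
       x^2*y^4, x^2*y^3*z, x^2*y^2*z^2, x^2*y*z^3, x^4*z^4, x*y^4*z, x*y^3*z^2, x*y^2*z^3,
       x*y*z^4, y^4*z^2, y^3*z^3, y^2*z^4}) :
    intCl I = ((Ideal.span {x, y, z} ^ 5 : Ideal (MvPolynomial (Fin 3) k)) :
      Set (MvPolynomial (Fin 3) k)) := by
  subst hx hy hz hI
  have h5 : ∀ i : Fin 3, (X i : MvPolynomial (Fin 3) k) ^ 5 ∈ Ideal.span
      {(X 0 : MvPolynomial (Fin 3) k)^5, (X 1)^5, (X 2)^5, (X 0)^4*(X 1)^2, (X 0)^4*(X 1)*(X 2),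
       (X 0)^4*(X 2)^2, (X 0)^3*(X 1)^3, (X 0)^3*(X 1)^2*(X 2), (X 0)^3*(X 1)*(X 2)^2,
       (X 0)^3*(X 2)^3, (X 0)^2*(X 1)^4, (X 0)^2*(X 1)^3*(X 2), (X 0)^2*(X 1)^2*(X 2)^2,
       (X 0)^2*(X 1)*(X 2)^3, (X 0)^4*(X 2)^4, (X 0)*(X 1)^4*(X 2), (X 0)*(X 1)^3*(X 2)^2,
       (X 0)*(X 1)^2*(X 2)^3, (X 0)*(X 1)*(X 2)^4, (X 1)^4*(X 2)^2, (X 1)^3*(X 2)^3,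
       (X 1)^2*(X 2)^4} := by
    intro i
    fin_cases i
    · exact Ideal.subset_span (Set.mem_insert _ _)
    · exact Ideal.subset_span (Set.mem_insert_of_mem _ (Set.mem_insert _ _))
    · exact Ideal.subset_span
        (Set.mem_insert_of_mem _ (Set.mem_insert_of_mem _ (Set.mem_insert _ _)))
  have hIle : Ideal.span
      {(X 0 : MvPolynomial (Fin 3) k)^5, (X 1)^5, (X 2)^5, (X 0)^4*(X 1)^2, (X 0)^4*(X 1)*(X 2),
       (X 0)^4*(X 2)^2, (X 0)^3*(X 1)^3, (X 0)^3*(X 1)^2*(X 2), (X 0)^3*(X 1)*(X 2)^2,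
       (X 0)^3*(X 2)^3, (X 0)^2*(X 1)^4, (X 0)^2*(X 1)^3*(X 2), (X 0)^2*(X 1)^2*(X 2)^2,
       (X 0)^2*(X 1)*(X 2)^3, (X 0)^4*(X 2)^4, (X 0)*(X 1)^4*(X 2), (X 0)*(X 1)^3*(X 2)^2,
       (X 0)*(X 1)^2*(X 2)^3, (X 0)*(X 1)*(X 2)^4, (X 1)^4*(X 2)^2, (X 1)^3*(X 2)^3,
       (X 1)^2*(X 2)^4} ≤ Jid k ^ 5 := by
    rw [Ideal.span_le]
    rintro g hg
    simp only [Set.mem_insert_iff, Set.mem_singleton_iff] at hg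
    rcases hg with rfl|rfl|rfl|rfl|rfl|rfl|rfl|rfl|rfl|rfl|rfl|rfl|rfl|rfl|rfl|rfl|rfl|rfl|rfl|rfl|rfl|rfl
    · simpa using mon_prod_mem (k := k) 5 0 0 (by norm_num)
    · simpa using mon_prod_mem (k := k) 0 5 0 (by norm_num)
    · simpa using mon_prod_mem (k := k) 0 0 5 (by norm_num)
    · simpa using mon_prod_mem (k := k) 4 2 0 (by norm_num)
    · simpa using mon_prod_mem (k := k) 4 1 1 (by norm_num)
    · simpa using mon_prod_mem (k := k) 4 0 2 (by norm_num)
    · simpa using mon_prod_mem (k := k) 3 3 0 (by norm_num)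
    · simpa using mon_prod_mem (k := k) 3 2 1 (by norm_num)
    · simpa using mon_prod_mem (k := k) 3 1 2 (by norm_num)
    · simpa using mon_prod_mem (k := k) 3 0 3 (by norm_num)
    · simpa using mon_prod_mem (k := k) 2 4 0 (by norm_num)
    · simpa using mon_prod_mem (k := k) 2 3 1 (by norm_num)
    · simpa using mon_prod_mem (k := k) 2 2 2 (by norm_num)
    · simpa using mon_prod_mem (k := k) 2 1 3 (by norm_num)
    · simpa using mon_prod_mem (k := k) 4 0 4 (by norm_num)
    · simpa using mon_prod_mem (k := k) 1 4 1 (by norm_num)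
    · simpa using mon_prod_mem (k := k) 1 3 2 (by norm_num)
    · simpa using mon_prod_mem (k := k) 1 2 3 (by norm_num)
    · simpa using mon_prod_mem (k := k) 1 1 4 (by norm_num)
    · simpa using mon_prod_mem (k := k) 0 4 2 (by norm_num)
    · simpa using mon_prod_mem (k := k) 0 3 3 (by norm_num)
    · simpa using mon_prod_mem (k := k) 0 2 4 (by norm_num)
  ext f
  simp only [SetLike.mem_coe]
  constructor
  · intro hf
    exact intCl_subset_K5 _ hIle f hf
  · intro hf
    exact K5_subset_intCl _ h5 f hf
end

section
/- Let x^{A_1},...,x^{A_c} be pairwise coprime monomials in k[x_1,...,x_n] and I the ideal they generate. If x^B is a minimal monomial generator of the integral closure Ī, then there exist rationals λ_1,...,λ_c ∈ [0,1] with Σ λ_i = 1 such that Σ λ_i A_i ≼ B componentwise, and consequently deg(x^B) ≥ min_i deg(x^{A_i}) and deg(x^B) ≤ Σ_i deg(x^{A_i}). -/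
open MvPolynomial

variable {k : Type} [Field k] {n : ℕ}

section AuxLemmas

variable {c : ℕ}

/-- The ideal of polynomials all of whose monomials dominate a sum of `i` of the `A t`'s. -/
def domIdeal (A : Fin c → (Fin n →₀ ℕ)) (i : ℕ) : Ideal (MvPolynomial (Fin n) k) where
  carrier := {g | ∀ D : Fin n →₀ ℕ, coeff D g ≠ 0 →
    ∃ m : Fin c → ℕ, (∑ t, m t) = i ∧ ∀ j, (∑ t, m t * A t j) ≤ D j}
  zero_mem' := by intro D hD; simp at hD
  add_mem' := by
    intro p q hp hq D hD
    rw [coeff_add] at hD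
    rcases (by by_contra h; push_neg at h; rw [h.1, h.2, add_zero] at hD; exact hD rfl :
      coeff D p ≠ 0 ∨ coeff D q ≠ 0) with h | h
    · exact hp D h
    · exact hq D h
  smul_mem' := by
    intro p q hq D hD
    rw [smul_eq_mul, coeff_mul] at hD
    obtain ⟨x, hx, hne⟩ := Finset.exists_ne_zero_of_sum_ne_zero hD
    rw [Finset.HasAntidiagonal.mem_antidiagonal] at hx
    obtain ⟨m, hm, hle⟩ := hq x.2 (fun h => hne (by rw [h, mul_zero]))
    exact ⟨m, hm, fun j => (hle j).trans (by
      calc x.2 j ≤ x.1 j + x.2 j := Nat.le_add_left _ _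
        _ = D j := by rw [← hx]; simp)⟩

lemma pow_le_domIdeal (A : Fin c → (Fin n →₀ ℕ)) (I : Ideal (MvPolynomial (Fin n) k))
    (hI : I = Ideal.span (Set.range fun i => monomial (A i) (1 : k))) (i : ℕ) :
    I ^ i ≤ domIdeal A i := by
  induction i with
  | zero =>
    intro g _hg D _hD
    exact ⟨0, by simp, by simp⟩
  | succ i ih =>
    have hI1 : I ≤ domIdeal A 1 := by
      rw [hI, Ideal.span_le]
      rintro _ ⟨t, rfl⟩ D hD
      rw [coeff_monomial] at hD
      have hDt : A t = D := by by_contra h; rw [if_neg h] at hD; exact hD rfl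
      refine ⟨fun s => if s = t then 1 else 0, by simp, fun j => ?_⟩
      rw [← hDt]
      exact le_of_eq (by simp [ite_mul])
    rw [pow_succ]
    apply Ideal.mul_le.2
    intro p hp q hq D hD
    rw [coeff_mul] at hD
    obtain ⟨x, hx, hne⟩ := Finset.exists_ne_zero_of_sum_ne_zero hD
    rw [Finset.HasAntidiagonal.mem_antidiagonal] at hx
    obtain ⟨m1, hm1, hle1⟩ := ih hp x.1 (fun h => hne (by rw [h, zero_mul]))
    obtain ⟨m2, hm2, hle2⟩ := hI1 hq x.2 (fun h => hne (by rw [h, mul_zero]))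
    refine ⟨fun t => m1 t + m2 t, by rw [Finset.sum_add_distrib, hm1, hm2], fun j => ?_⟩
    have heq : (∑ t, (m1 t + m2 t) * A t j) = (∑ t, m1 t * A t j) + ∑ t, m2 t * A t j := by
      rw [← Finset.sum_add_distrib]; apply Finset.sum_congr rfl; intros; ring
    rw [heq]
    calc (∑ t, m1 t * A t j) + ∑ t, m2 t * A t j ≤ x.1 j + x.2 j :=
          Nat.add_le_add (hle1 j) (hle2 j)
      _ = D j := by rw [← hx]; simp

lemma monomial_mem_pow (A : Fin c → (Fin n →₀ ℕ)) (I : Ideal (MvPolynomial (Fin n) k))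
    (hI : I = Ideal.span (Set.range fun i => monomial (A i) (1 : k)))
    (i : ℕ) (m : Fin c → ℕ) (hm : ∑ t, m t = i) (D : Fin n →₀ ℕ)
    (hD : ∀ j, (∑ t, m t * A t j) ≤ D j) :
    (monomial D (1:k)) ∈ I ^ i := by
  set S : Fin n →₀ ℕ := ∑ t, m t • A t with hS
  have hSapp : ∀ j, S j = ∑ t, m t * A t j := by
    intro j; rw [hS, Finsupp.finset_sum_apply]; simp [Finsupp.smul_apply]
  have hSD : S ≤ D := by
    intro j; rw [hSapp]; exact hD j
  have hprod : ∀ s : Finset (Fin c),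
      (∏ t ∈ s, (monomial (A t) (1:k)) ^ (m t)) = monomial (∑ t ∈ s, m t • A t) 1 := by
    intro s
    induction s using Finset.induction with
    | empty => simp
    | insert _ _ h ih =>
      rw [Finset.prod_insert h, Finset.sum_insert h, ih, monomial_pow, monomial_mul]
      simp
  have hmem : ∀ s : Finset (Fin c),
      (∏ t ∈ s, (monomial (A t) (1:k)) ^ (m t)) ∈ I ^ (∑ t ∈ s, m t) := by
    intro s
    induction s using Finset.induction with
    | empty => simp [Ideal.one_eq_top]
    | insert _ _ h ih =>
      rw [Finset.prod_insert h, Finset.sum_insert h, pow_add]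
      exact Ideal.mul_mem_mul (Ideal.pow_mem_pow (by
        rw [hI]; exact Ideal.subset_span ⟨_, rfl⟩) _) ih
  have key := hmem Finset.univ
  rw [hm, hprod] at key
  have hsplit : monomial D (1:k) = monomial (D - S) 1 * monomial S 1 := by
    rw [monomial_mul, one_mul, tsub_add_cancel_of_le hSD]
  rw [hsplit]
  exact Ideal.mul_mem_left _ _ key

lemma intCl_key (A : Fin c → (Fin n →₀ ℕ)) (I : Ideal (MvPolynomial (Fin n) k))
    (hI : I = Ideal.span (Set.range fun i => monomial (A i) (1 : k)))
    (B : Fin n →₀ ℕ) (hB : monomial B (1:k) ∈ intCl I) :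
    ∃ i : ℕ, 1 ≤ i ∧ ∃ m : Fin c → ℕ, (∑ t, m t) = i ∧
      ∀ j, (∑ t, m t * A t j) ≤ i * B j := by
  obtain ⟨r, hr, a, ha, heq⟩ := hB
  have hpow : ∀ s : ℕ, (monomial B (1:k)) ^ s = monomial (s • B) 1 := by
    intro s; rw [monomial_pow, one_pow]
  have hc := congrArg (coeff (r • B)) heq
  rw [coeff_add, hpow, coeff_monomial, if_pos rfl, coeff_zero] at hc
  have hsum : (∑ i ∈ Finset.Icc 1 r, coeff (r • B) (a i * (monomial B (1:k)) ^ (r - i)))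
      ≠ 0 := by
    rw [coeff_sum] at hc
    intro h; rw [h, add_zero] at hc; exact one_ne_zero hc
  obtain ⟨i, hiIcc, hine⟩ := Finset.exists_ne_zero_of_sum_ne_zero hsum
  rw [Finset.mem_Icc] at hiIcc
  rw [hpow, coeff_mul_monomial'] at hine
  have hle : (r - i) • B ≤ r • B := by
    intro j; simp only [Finsupp.smul_apply, smul_eq_mul]
    exact Nat.mul_le_mul_right _ (Nat.sub_le r i)
  rw [if_pos hle, mul_one] at hine
  have hsub : r • B - (r - i) • B = i • B := by
    ext j
    rw [Finsupp.tsub_apply]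
    simp only [Finsupp.smul_apply, smul_eq_mul]
    rcases Nat.exists_eq_add_of_le hiIcc.2 with ⟨d, rfl⟩
    have h1 : (i + d) - i = d := by omega
    rw [h1, Nat.add_mul, Nat.add_sub_cancel]
  rw [hsub] at hine
  obtain ⟨m, hm, hd⟩ := pow_le_domIdeal A I hI i (ha i hiIcc.1 hiIcc.2) (i • B) hine
  exact ⟨i, hiIcc.1, m, hm, fun j => by
    have := hd j
    simpa [Finsupp.smul_apply] using this⟩

end AuxLemmas

/-- Let `I` be generated by nonconstant pairwise coprime monomials
`x^{A 1}, …, x^{A c}` (a complete intersection). Every minimal monomial generator `x^B` of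
the integral closure dominates a convex combination of the `A i`; consequently
`deg x^B ≥ min_i deg x^{A i}` and `deg x^B ≤ ∑ i deg x^{A i}`. -/
theorem intCl_minExps_convex_bounds {c : ℕ} (A : Fin c → (Fin n →₀ ℕ))
    (hA0 : ∀ i, A i ≠ 0)
    (hcop : Pairwise fun i j => Disjoint (A i).support (A j).support)
    (I : Ideal (MvPolynomial (Fin n) k))
    (hI : I = Ideal.span (Set.range fun i => monomial (A i) (1 : k))) :
    ∀ B ∈ minExps (intCl I),
      (∃ lam : Fin c → ℚ, (∀ i, 0 ≤ lam i ∧ lam i ≤ 1) ∧ (∑ i, lam i = 1) ∧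
        ∀ j : Fin n, (∑ i, lam i * ((A i) j : ℚ)) ≤ (B j : ℚ)) ∧
      (∃ i₀ : Fin c, ∑ j, (A i₀) j ≤ ∑ j, B j) ∧
      (∑ j, B j ≤ ∑ i, ∑ j, (A i) j) := by
  intro B hB
  obtain ⟨hBmem, hBmin⟩ := hB
  obtain ⟨i, hi, m, hm, hdom⟩ := intCl_key A I hI B hBmem
  have hipos : (0:ℚ) < (i:ℚ) := by exact_mod_cast hi
  have hmt : ∀ t, m t ≤ i := by
    intro t; rw [← hm]
    exact Finset.single_le_sum (fun _ _ => Nat.zero_le _) (Finset.mem_univ t)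
  refine ⟨?_, ?_, ?_⟩
  · -- convex combination
    refine ⟨fun t => (m t : ℚ) / (i : ℚ), fun t => ⟨by positivity, ?_⟩, ?_, ?_⟩
    · rw [div_le_one hipos]; exact_mod_cast hmt t
    · rw [← Finset.sum_div, div_eq_one_iff_eq (ne_of_gt hipos)]
      exact_mod_cast hm
    · intro j
      have heq : (∑ t, (m t:ℚ)/(i:ℚ) * (A t j : ℚ)) = (∑ t, (m t:ℚ) * (A t j:ℚ)) / i := by
        rw [Finset.sum_div]; apply Finset.sum_congr rfl; intros; ring
      rw [heq, div_le_iff₀ hipos]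
      have h1 : (∑ t, m t * A t j) ≤ B j * i := by rw [mul_comm]; exact hdom j
      exact_mod_cast h1
  · -- lower degree bound
    have hne : (Finset.univ.filter (fun t => m t ≠ 0)).Nonempty := by
      by_contra h
      rw [Finset.not_nonempty_iff_eq_empty, Finset.filter_eq_empty_iff] at h
      have : ∑ t, m t = 0 := Finset.sum_eq_zero (fun t ht => by
        have := h ht; simpa using this)
      omega
    obtain ⟨i₀, hi₀mem, hi₀min⟩ := Finset.exists_min_image _ (fun t => ∑ j, A t j) hne
    refine ⟨i₀, ?_⟩
    have hkey : (∑ t, m t * (∑ j, A t j)) ≤ i * (∑ j, B j) := by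
      calc ∑ t, m t * (∑ j, A t j) = ∑ t, ∑ j, m t * A t j := by
            apply Finset.sum_congr rfl; intros; rw [Finset.mul_sum]
        _ = ∑ j, ∑ t, m t * A t j := Finset.sum_comm
        _ ≤ ∑ j, i * B j := Finset.sum_le_sum (fun j _ => hdom j)
        _ = i * ∑ j, B j := (Finset.mul_sum _ _ _).symm
    have h2 : i * (∑ j, A i₀ j) ≤ ∑ t, m t * (∑ j, A t j) := by
      calc i * (∑ j, A i₀ j) = (∑ t, m t) * (∑ j, A i₀ j) := by rw [hm]
        _ = ∑ t, m t * (∑ j, A i₀ j) := Finset.sum_mul _ _ _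
        _ ≤ ∑ t, m t * (∑ j, A t j) := by
            apply Finset.sum_le_sum
            intro t _
            by_cases h : m t = 0
            · rw [h]; simp
            · exact Nat.mul_le_mul_left _ (hi₀min t (Finset.mem_filter.2 ⟨Finset.mem_univ t, h⟩))
    exact Nat.le_of_mul_le_mul_left (le_trans h2 hkey) (by omega)
  · -- upper degree bound
    set T : Fin n →₀ ℕ := ∑ t, A t with hT
    have hTapp : ∀ j, T j = ∑ t, A t j := fun j => by
      rw [hT, Finsupp.finset_sum_apply]
    set B' : Fin n →₀ ℕ := B - (B - T) with hB'
    have hB'app : ∀ j, B' j = min (B j) (T j) := fun j => by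
      rw [hB', Finsupp.tsub_apply, Finsupp.tsub_apply]; omega
    have hB'le : B' ≤ B := tsub_le_self
    have hpowmem : monomial ((i • B' : Fin n →₀ ℕ)) (1:k) ∈ I ^ i := by
      apply monomial_mem_pow A I hI i m hm
      intro j
      rw [Finsupp.smul_apply, smul_eq_mul, hB'app]
      have h1 := hdom j
      have h2 : (∑ t, m t * A t j) ≤ i * T j := by
        rw [hTapp, Finset.mul_sum]
        exact Finset.sum_le_sum fun t _ => Nat.mul_le_mul_right _ (hmt t)
      rcases min_cases (B j) (T j) with ⟨hmin, _⟩ | ⟨hmin, _⟩ <;> rw [hmin] <;> assumption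
    have hB'mem : monomial B' (1:k) ∈ intCl I := by
      refine ⟨i, hi, fun t => if t = i then -((monomial B' (1:k)) ^ i) else 0, ?_, ?_⟩
      · intro t h1 h2
        dsimp only
        split
        · next h => subst h; rw [monomial_pow, one_pow]; exact neg_mem hpowmem
        · exact zero_mem _
      · have hsum : (∑ t ∈ Finset.Icc 1 i,
            (if t = i then -((monomial B' (1:k)) ^ i) else 0) * (monomial B' (1:k)) ^ (i - t))
            = -((monomial B' (1:k)) ^ i) := by
          rw [Finset.sum_eq_single i]
          · rw [if_pos rfl, Nat.sub_self, pow_zero, mul_one]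
          · intro t _ htne; rw [if_neg htne, zero_mul]
          · intro h; exact absurd (Finset.mem_Icc.2 ⟨hi, le_refl i⟩) h
        rw [hsum, add_neg_cancel]
    have hEq : B' = B := hBmin B' hB'mem hB'le
    have hBT : ∀ j, B j ≤ T j := by
      intro j
      have h := hB'app j
      rw [hEq] at h
      omega
    calc ∑ j, B j ≤ ∑ j, T j := Finset.sum_le_sum fun j _ => hBT j
      _ = ∑ j, ∑ t, A t j := by apply Finset.sum_congr rfl; intros; rw [hTapp]
      _ = ∑ t, ∑ j, A t j := Finset.sum_comm
end

section
/- Let I be a stable monomial ideal of k[x_1,...,x_n], let x^B be a monomial in the integral closure Ī with m(x^B) = t (the largest index of a variable dividing x^B), and let i < t. Then x_i · x^B / x_t belongs to Ī. -/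
open MvPolynomial

variable {k : Type} [Field k] {n : ℕ}

/-- A set `T` of polynomials is *stable* if for every monomial `x^A ∈ T`, letting `t` be the
largest index of a variable dividing `x^A`, we have `x_i · x^A / x_t ∈ T` for all `i < t`. -/
def IsStableSet (T : Set (MvPolynomial (Fin n) k)) : Prop :=
  ∀ A : Fin n →₀ ℕ, monomial A (1 : k) ∈ T →
    ∀ t : Fin n, A t ≠ 0 → (∀ s, A s ≠ 0 → s ≤ t) →
      ∀ i, i < t →
        monomial (A + Finsupp.single i 1 - Finsupp.single t 1) (1 : k) ∈ T

/-- Iterated sumset: exponent vectors that are sums of `m` elements of `G`. -/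
def sumSet (G : Set (Fin n →₀ ℕ)) : ℕ → Set (Fin n →₀ ℕ)
  | 0 => {0}
  | m + 1 => {C | ∃ a ∈ G, ∃ d ∈ sumSet G m, C = a + d}

lemma span_pow_eq (G : Set (Fin n →₀ ℕ)) (m : ℕ) :
    (Ideal.span ((fun A => (monomial A (1 : k))) '' G)) ^ m =
      Ideal.span ((fun A => (monomial A (1 : k))) '' (sumSet G m)) := by
  induction m with
  | zero =>
      simp only [pow_zero, Ideal.one_eq_top, sumSet, Set.image_singleton,
        monomial_zero', map_one]
      exact (Ideal.span_singleton_one).symm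
  | succ m ih =>
      rw [pow_succ, ih, Ideal.span_mul_span]
      congr 1
      ext f
      constructor
      · intro hf
        simp only [Set.mem_mul, Set.mem_image2, Set.mem_image] at hf
        obtain ⟨x, ⟨D, hD, rfl⟩, y, ⟨a, ha, rfl⟩, rfl⟩ := hf
        exact ⟨D + a, ⟨a, ha, D, hD, (add_comm D a)⟩,
          by rw [monomial_mul, one_mul]⟩
      · rintro ⟨C, ⟨a, ha, d, hd, rfl⟩, rfl⟩
        simp only [Set.mem_iUnion, Set.mem_singleton_iff, Set.mem_image]
        exact ⟨monomial d 1, ⟨d, hd, rfl⟩, monomial a 1, ⟨a, ha, rfl⟩,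
          by beta_reduce; rw [monomial_mul, one_mul, add_comm]⟩

lemma monomial_mem_of_le {J : Ideal (MvPolynomial (Fin n) k)} {E D : Fin n →₀ ℕ}
    (h : monomial E (1 : k) ∈ J) (hle : E ≤ D) : monomial D (1 : k) ∈ J := by
  have : monomial D (1 : k) = monomial (D - E) 1 * monomial E 1 := by
    rw [monomial_mul, one_mul, tsub_add_cancel_of_le hle]
  rw [this]
  exact Ideal.mul_mem_left _ _ h

lemma monomial_mem_pow_iff (G : Set (Fin n →₀ ℕ)) (m : ℕ) (D : Fin n →₀ ℕ) :
    monomial D (1 : k) ∈ (Ideal.span ((fun A => (monomial A (1 : k))) '' G)) ^ m ↔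
      ∃ C ∈ sumSet G m, C ≤ D := by
  rw [span_pow_eq]
  constructor
  · intro h
    have := mem_ideal_span_monomial_image.mp h
    have hD : D ∈ (monomial D (1 : k)).support := by
      rw [mem_support_iff, coeff_monomial, if_pos rfl]
      exact one_ne_zero
    exact this D hD
  · rintro ⟨C, hC, hle⟩
    exact monomial_mem_of_le (Ideal.subset_span ⟨C, hC, rfl⟩) hle


lemma extraction (I : Ideal (MvPolynomial (Fin n) k)) (G : Set (Fin n →₀ ℕ))
    (hG : I = Ideal.span ((fun A => (monomial A (1 : k))) '' G))
    (B : Fin n →₀ ℕ)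
    (hB : ∃ r : ℕ, 0 < r ∧ ∃ a : ℕ → MvPolynomial (Fin n) k,
      (∀ i, 1 ≤ i → i ≤ r → a i ∈ I ^ i) ∧
      (monomial B (1 : k)) ^ r + ∑ i ∈ Finset.Icc 1 r, a i * (monomial B (1 : k)) ^ (r - i) = 0) :
    ∃ m : ℕ, 1 ≤ m ∧ monomial (m • B) (1 : k) ∈ I ^ m := by
  obtain ⟨r, hr, a, ha, heq⟩ := hB
  have hpow : ∀ j : ℕ, (monomial B (1 : k)) ^ j = monomial (j • B) 1 := by
    intro j; rw [monomial_pow, one_pow]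
  have hco : coeff (r • B) (∑ i ∈ Finset.Icc 1 r, a i * (monomial B (1 : k)) ^ (r - i))
      = -1 := by
    have := congrArg (coeff (r • B)) heq
    rw [coeff_add, hpow r, coeff_monomial, if_pos rfl, coeff_zero] at this
    linear_combination this
  have hne : ∃ i ∈ Finset.Icc 1 r,
      coeff (r • B) (a i * (monomial B (1 : k)) ^ (r - i)) ≠ 0 := by
    by_contra h
    push_neg at h
    rw [coeff_sum] at hco
    rw [Finset.sum_eq_zero h] at hco
    exact one_ne_zero (neg_eq_zero.mp hco.symm)
  obtain ⟨m, hm, hcm⟩ := hne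
  rw [Finset.mem_Icc] at hm
  refine ⟨m, hm.1, ?_⟩
  have hsplit : r • B = m • B + (r - m) • B := by
    rw [← add_nsmul]
    congr 1
    omega
  rw [hpow, hsplit, coeff_mul_monomial, mul_one] at hcm
  -- so m • B is in the support of a m, and a m ∈ I ^ m
  have hmem : a m ∈ I ^ m := ha m hm.1 hm.2
  rw [hG, span_pow_eq] at hmem ⊢
  have := mem_ideal_span_monomial_image.mp hmem (m • B) (mem_support_iff.mpr hcm)
  obtain ⟨C, hC, hle⟩ := this
  exact monomial_mem_of_le (Ideal.subset_span ⟨C, hC, rfl⟩) hle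

lemma converse_mem (I : Ideal (MvPolynomial (Fin n) k)) (B : Fin n →₀ ℕ) (m : ℕ)
    (hm : 1 ≤ m) (h : monomial (m • B) (1 : k) ∈ I ^ m) :
    ∃ r : ℕ, 0 < r ∧ ∃ a : ℕ → MvPolynomial (Fin n) k,
      (∀ i, 1 ≤ i → i ≤ r → a i ∈ I ^ i) ∧
      (monomial B (1 : k)) ^ r + ∑ i ∈ Finset.Icc 1 r, a i * (monomial B (1 : k)) ^ (r - i) = 0 := by
  refine ⟨m, hm, fun j => if j = m then -((monomial B (1 : k)) ^ m) else 0, ?_, ?_⟩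
  · intro j h1 h2
    by_cases hj : j = m
    · subst hj
      simp only [if_pos rfl]
      rw [monomial_pow, one_pow]
      exact neg_mem h
    · simp [hj]
  · rw [Finset.sum_eq_single_of_mem m (Finset.mem_Icc.mpr ⟨hm, le_refl m⟩)]
    · simp
    · intro j hj hjm
      simp [hjm]

lemma sumSet_split (G : Set (Fin n →₀ ℕ)) (t : Fin n) :
    ∀ m : ℕ, ∀ C ∈ sumSet G (m + 1), C t ≠ 0 →
      ∃ a ∈ G, ∃ d ∈ sumSet G m, C = a + d ∧ a t ≠ 0 := by
  intro m
  induction m with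
  | zero =>
      rintro C ⟨a, ha, d, hd, rfl⟩ hC
      obtain rfl : d = 0 := hd
      refine ⟨a, ha, 0, rfl, rfl, ?_⟩
      simpa using hC
  | succ m ih =>
      rintro C ⟨a, ha, d, hd, rfl⟩ hC
      by_cases hat : a t ≠ 0
      · exact ⟨a, ha, d, hd, rfl, hat⟩
      · push_neg at hat
        have hdt : d t ≠ 0 := by
          intro h0
          apply hC
          simp [Finsupp.add_apply, hat, h0]
        obtain ⟨a0, ha0, e, he, rfl, ha0t⟩ := ih d hd hdt
        exact ⟨a0, ha0, a + e, ⟨a, ha, e, he, rfl⟩, by rw [add_left_comm], ha0t⟩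

lemma exch_apply (A : Fin n →₀ ℕ) {i t : Fin n} (hit : i ≠ t) (s : Fin n) :
    ((A + Finsupp.single i 1 - Finsupp.single t 1 : Fin n →₀ ℕ)) s =
      A s + (if s = i then 1 else 0) - (if s = t then 1 else 0) := by
  rw [Finsupp.tsub_apply, Finsupp.add_apply]
  rcases eq_or_ne s i with rfl | h1
  · rw [Finsupp.single_eq_same, Finsupp.single_eq_of_ne' hit.symm, if_pos rfl,
      if_neg (fun h : s = t => hit h)]
  · rw [Finsupp.single_eq_of_ne' (fun h : i = s => h1 h.symm), if_neg h1]
    rcases eq_or_ne s t with rfl | h2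
    · rw [Finsupp.single_eq_same, if_pos rfl]
    · rw [Finsupp.single_eq_of_ne' (fun h : t = s => h2 h.symm), if_neg h2]

lemma stable_step (I : Ideal (MvPolynomial (Fin n) k)) (G : Set (Fin n →₀ ℕ))
    (hG : I = Ideal.span ((fun A => (monomial A (1 : k))) '' G))
    (hst : IsStableSet (I : Set (MvPolynomial (Fin n) k)))
    (m : ℕ) (hm : 1 ≤ m) (A : Fin n →₀ ℕ)
    (hA : monomial A (1 : k) ∈ I ^ m)
    (t : Fin n) (hAt : A t ≠ 0) (hmax : ∀ s, A s ≠ 0 → s ≤ t)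
    (i : Fin n) (hi : i < t) :
    monomial (A + Finsupp.single i 1 - Finsupp.single t 1) (1 : k) ∈ I ^ m := by
  have hit : i ≠ t := ne_of_lt hi
  rw [hG, monomial_mem_pow_iff] at hA
  obtain ⟨C, hC, hle⟩ := hA
  rcases lt_or_eq_of_le (hle t) with hlt | heqt
  · -- C t < A t : C still divides the new monomial
    have hCmem : monomial C (1 : k) ∈ I ^ m := by
      rw [hG, monomial_mem_pow_iff]; exact ⟨C, hC, le_refl C⟩
    refine monomial_mem_of_le hCmem ?_
    intro s
    rw [exch_apply A hit s]
    rcases eq_or_ne s t with rfl | h2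
    · rw [if_neg (fun h : s = i => hit h.symm), if_pos rfl]
      omega
    · have := hle s
      rw [if_neg h2]
      split_ifs <;> omega
  · -- C t = A t ≠ 0 : use stability on a factor containing t
    obtain ⟨m', rfl⟩ : ∃ m', m = m' + 1 := ⟨m - 1, by omega⟩
    have hCt : C t ≠ 0 := by rw [heqt]; exact hAt
    obtain ⟨a, ha, d, hd, rfl, hat⟩ := sumSet_split G t m' C hC hCt
    -- a is stable-exchangeable
    have haI : monomial a (1 : k) ∈ I := by
      rw [hG]; exact Ideal.subset_span ⟨a, ha, rfl⟩
    have hamax : ∀ s, a s ≠ 0 → s ≤ t := by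
      intro s hs
      apply hmax s
      have h1 : a s ≤ A s := le_trans (by simp [Finsupp.add_apply]) (hle s)
      omega
    have hexch := hst a haI t hat hamax i hi
    have hd' : monomial d (1 : k) ∈ I ^ m' := by
      rw [hG, monomial_mem_pow_iff]; exact ⟨d, hd, le_refl d⟩
    have hprod : monomial ((a + Finsupp.single i 1 - Finsupp.single t 1) + d) (1 : k)
        ∈ I ^ (m' + 1) := by
      have := Ideal.mul_mem_mul hexch hd'
      rw [monomial_mul, one_mul] at this
      rwa [pow_succ']
    refine monomial_mem_of_le hprod ?_
    intro s
    rw [Finsupp.add_apply, exch_apply A hit s, exch_apply a hit s]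
    have h1 : a s + d s ≤ A s := by
      have := hle s
      rw [Finsupp.add_apply] at this
      omega
    have h2 : a t + d t = A t := by
      rw [← heqt, Finsupp.add_apply]
    rcases eq_or_ne s t with rfl | hst2
    · rw [if_neg (fun h : s = i => hit h.symm), if_pos rfl]
      omega
    · rw [if_neg hst2]
      split_ifs <;> omega

lemma gen_apply (A : Fin n →₀ ℕ) (i t : Fin n) (u v : ℕ) (s : Fin n) :
    ((A + Finsupp.single i u - Finsupp.single t v : Fin n →₀ ℕ)) s =
      A s + (if i = s then u else 0) - (if t = s then v else 0) := by
  rw [Finsupp.tsub_apply, Finsupp.add_apply, Finsupp.single_apply, Finsupp.single_apply]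


/-- Let `I` be a stable monomial ideal, `x^B` a monomial in the integral
closure `Ī`, `t = m(x^B)` the largest index of a variable dividing `x^B`, and `i < t`.
Then `x_i · x^B / x_t ∈ Ī`. -/
theorem intCl_stable_exchange (I : Ideal (MvPolynomial (Fin n) k))
    (hI : IsMonomialIdeal I) (hst : IsStableSet (I : Set (MvPolynomial (Fin n) k)))
    (B : Fin n →₀ ℕ) (hB : monomial B (1 : k) ∈ intCl I)
    (t : Fin n) (ht : B t ≠ 0) (htmax : ∀ s, B s ≠ 0 → s ≤ t)
    (i : Fin n) (hi : i < t) :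
    monomial (B + Finsupp.single i 1 - Finsupp.single t 1) (1 : k) ∈ intCl I := by
  obtain ⟨G, hG⟩ := hI
  have hit : i ≠ t := ne_of_lt hi
  obtain ⟨m, hm, hmem⟩ := extraction I G hG B hB
  have claim : ∀ j, j ≤ m →
      monomial (m • B + Finsupp.single i j - Finsupp.single t j) (1 : k) ∈ I ^ m := by
    intro j
    induction j with
    | zero =>
        intro _
        simpa [Finsupp.single_zero] using hmem
    | succ j ihj =>
        intro hj1
        have ihj' := ihj (by omega)
        have hBt : m ≤ m * B t := Nat.le_mul_of_pos_right m (Nat.pos_of_ne_zero ht)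
        have hAjapp : ∀ s, (m • B + Finsupp.single i j - Finsupp.single t j
              : Fin n →₀ ℕ) s =
            m * B s + (if i = s then j else 0) - (if t = s then j else 0) := by
          intro s
          rw [gen_apply, Finsupp.smul_apply, smul_eq_mul]
        have hAjt : (m • B + Finsupp.single i j - Finsupp.single t j : Fin n →₀ ℕ) t
            ≠ 0 := by
          rw [hAjapp t, if_neg hit, if_pos rfl]
          omega
        have hmax' : ∀ s, (m • B + Finsupp.single i j - Finsupp.single t j
              : Fin n →₀ ℕ) s ≠ 0 → s ≤ t := by
          intro s hs
          rcases eq_or_ne i s with h1 | h1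
          · exact h1 ▸ le_of_lt hi
          · rcases eq_or_ne t s with h2 | h2
            · exact le_of_eq h2.symm
            · apply htmax s
              rw [hAjapp s, if_neg h1, if_neg h2] at hs
              intro h0
              rw [h0, mul_zero] at hs
              simp at hs
        have hstep := stable_step I G hG hst m hm _ ihj' t hAjt hmax' i hi
        have hEq : ((m • B + Finsupp.single i j - Finsupp.single t j : Fin n →₀ ℕ)
              + Finsupp.single i 1 - Finsupp.single t 1) =
            m • B + Finsupp.single i (j + 1) - Finsupp.single t (j + 1) := by
          ext s
          simp only [gen_apply, hAjapp s, Finsupp.smul_apply, smul_eq_mul]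
          rcases eq_or_ne i s with h1 | h1
          · rcases eq_or_ne t s with h2 | h2
            · exact absurd (h1.trans h2.symm) hit
            · simp only [if_pos h1, if_neg h2]
              omega
          · simp only [if_neg h1]
            rcases eq_or_ne t s with h2 | h2
            · simp only [if_pos h2]
              omega
            · simp only [if_neg h2]
              omega
        rwa [hEq] at hstep
  have hfinal := claim m (le_refl m)
  have hEq2 : (m • B + Finsupp.single i m - Finsupp.single t m : Fin n →₀ ℕ) =
      m • (B + Finsupp.single i 1 - Finsupp.single t 1) := by
    ext s
    simp only [gen_apply, Finsupp.smul_apply, smul_eq_mul]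
    rcases eq_or_ne i s with h1 | h1
    · rcases eq_or_ne t s with h2 | h2
      · exact absurd (h1.trans h2.symm) hit
      · simp only [if_pos h1, if_neg h2, Nat.sub_zero, Nat.mul_add, mul_one]
    · simp only [if_neg h1, add_zero]
      rcases eq_or_ne t s with h2 | h2
      · simp only [if_pos h2, Nat.mul_sub, mul_one]
      · simp only [if_neg h2, Nat.sub_zero]
  rw [hEq2] at hfinal
  exact converse_mem I (B + Finsupp.single i 1 - Finsupp.single t 1) m hm hfinal
end
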